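/- arXiv:1911.00259 — 5 statements merged into one kernel-verified Lean document; each statement's English description precedes it below -/
import Mathlib

section
/- Let C be an extriangulated category with weak kernels. Then the full subcategory eff C of effaceable finitely presented functors is a Serre subcategory of mod C: it is closed under subobjects, quotient objects, and extensions. -/
open CategoryTheory CategoryTheory.Limits Opposite

universe w' w v u

noncomputable section

namespace PaperStmt

variable {C : Type u} [Category.{v} C] [Preadditive C]

/-- The category of right `C`-modules (contravariant functors `C ⥤ Ab`). -/
abbrev Mod (C : Type u) [Category.{v} C] [Preadditive C] := Cᵒᵖ ⥤ AddCommGrpCat.{v}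

/-- A `C`-module `F` is finitely presented if it admits a presentation
`Hom(-,Y) ⟶ Hom(-,X) ⟶ F ⟶ 0`, expressed pointwise:  there are a morphism
`f : Y ⟶ X` and an epimorphism `p : Hom(-,X) ⟶ F` whose kernel is, at every
object `W`, exactly the set of morphisms factoring through `f`. -/
def IsFinitelyPresented (F : Mod C) : Prop :=
  ∃ (Y X : C) (f : Y ⟶ X) (p : preadditiveYoneda.obj X ⟶ F),
    (∀ W : Cᵒᵖ, Function.Surjective (p.app W)) ∧
    (∀ (W : C) (h : W ⟶ X), p.app (op W) h = 0 ↔ ∃ k : W ⟶ Y, k ≫ f = h)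

/-- `C` has weak kernels: every morphism admits a weak kernel. -/
def HasWeakKernels (C : Type u) [Category.{v} C] [Preadditive C] : Prop :=
  ∀ ⦃X Y : C⦄ (f : X ⟶ Y), ∃ (K : C) (g : K ⟶ X), g ≫ f = 0 ∧
    ∀ ⦃W : C⦄ (h : W ⟶ X), h ≫ f = 0 → ∃ t : W ⟶ K, t ≫ g = h

/-- An extriangulated category structure `(E, s)` on an additive category `C`
(Nakaoka–Palu).  The realization `s` is encoded by the relation
`Real δ g f`, meaning that the sequence `Z ⟶ Y ⟶ X` belongs to the
equivalence class `s(δ)`. -/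
structure Extriangulated (C : Type u) [Category.{v} C] [Preadditive C]
    [HasZeroObject C] [HasBinaryBiproducts C] where
  /-- the bifunctor of `E`-extensions -/
  E : Cᵒᵖ ⥤ C ⥤ AddCommGrpCat.{v}
  additive₁ : E.Additive
  additive₂ : ∀ X : Cᵒᵖ, (E.obj X).Additive
  /-- `Real δ g f` : the pair `(g, f)` realizes the extension `δ`. -/
  Real : ∀ ⦃X Z : C⦄, ((E.obj (op X)).obj Z) → ∀ ⦃Y : C⦄, (Z ⟶ Y) → (Y ⟶ X) → Prop
  /-- every extension is realized -/
  real_exists : ∀ ⦃X Z : C⦄ (δ : (E.obj (op X)).obj Z),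
    ∃ (Y : C) (g : Z ⟶ Y) (f : Y ⟶ X), Real δ g f
  /-- any two realizations of the same extension are equivalent -/
  real_unique : ∀ ⦃X Z : C⦄ (δ : (E.obj (op X)).obj Z) ⦃Y Y' : C⦄
    (g : Z ⟶ Y) (f : Y ⟶ X) (g' : Z ⟶ Y') (f' : Y' ⟶ X),
    Real δ g f → Real δ g' f' →
    ∃ i : Y ≅ Y', g ≫ i.hom = g' ∧ i.hom ≫ f' = f
  /-- the realization is closed under equivalence of sequences -/
  real_of_iso : ∀ ⦃X Z : C⦄ (δ : (E.obj (op X)).obj Z) ⦃Y Y' : C⦄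
    (g : Z ⟶ Y) (f : Y ⟶ X) (i : Y ≅ Y'),
    Real δ g f → Real δ (g ≫ i.hom) (i.inv ≫ f)
  /-- `s(0)` is the split sequence (additivity of `s`, part 1) -/
  real_zero : ∀ (X Z : C),
    Real (0 : (E.obj (op X)).obj Z) (biprod.inl : Z ⟶ Z ⊞ X) (biprod.snd : Z ⊞ X ⟶ X)
  /-- `s(δ ⊕ δ') = s(δ) ⊕ s(δ')` (additivity of `s`, part 2) -/
  real_add : ∀ ⦃X Z X' Z' : C⦄ (δ : (E.obj (op X)).obj Z) (δ' : (E.obj (op X')).obj Z')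
    ⦃Y Y' : C⦄ (g : Z ⟶ Y) (f : Y ⟶ X) (g' : Z' ⟶ Y') (f' : Y' ⟶ X'),
    Real δ g f → Real δ' g' f' →
    Real ((E.map (biprod.fst : X ⊞ X' ⟶ X).op).app _ ((E.obj (op X)).map (biprod.inl : Z ⟶ Z ⊞ Z') δ) +
          (E.map (biprod.snd : X ⊞ X' ⟶ X').op).app _ ((E.obj (op X')).map (biprod.inr : Z' ⟶ Z ⊞ Z') δ'))
      (biprod.map g g') (biprod.map f f')
  /-- realization of morphisms of extensions (condition `(∗)`) -/
  real_lift : ∀ ⦃X Z X' Z' : C⦄ (δ : (E.obj (op X)).obj Z) (δ' : (E.obj (op X')).obj Z')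
    ⦃Y Y' : C⦄ (g : Z ⟶ Y) (f : Y ⟶ X) (g' : Z' ⟶ Y') (f' : Y' ⟶ X')
    (z : Z ⟶ Z') (x : X ⟶ X'),
    Real δ g f → Real δ' g' f' →
    (E.obj (op X)).map z δ = (E.map x.op).app Z' δ' →
    ∃ y : Y ⟶ Y', g ≫ y = z ≫ g' ∧ y ≫ f' = f ≫ x
  /-- (ET3) -/
  et3 : ∀ ⦃X Z X' Z' : C⦄ (δ : (E.obj (op X)).obj Z) (δ' : (E.obj (op X')).obj Z')
    ⦃Y Y' : C⦄ (g : Z ⟶ Y) (f : Y ⟶ X) (g' : Z' ⟶ Y') (f' : Y' ⟶ X')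
    (z : Z ⟶ Z') (y : Y ⟶ Y'),
    Real δ g f → Real δ' g' f' → g ≫ y = z ≫ g' →
    ∃ x : X ⟶ X', y ≫ f' = f ≫ x ∧
      (E.obj (op X)).map z δ = (E.map x.op).app Z' δ'
  /-- (ET3)ᵒᵖ -/
  et3op : ∀ ⦃X Z X' Z' : C⦄ (δ : (E.obj (op X)).obj Z) (δ' : (E.obj (op X')).obj Z')
    ⦃Y Y' : C⦄ (g : Z ⟶ Y) (f : Y ⟶ X) (g' : Z' ⟶ Y') (f' : Y' ⟶ X')
    (y : Y ⟶ Y') (x : X ⟶ X'),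
    Real δ g f → Real δ' g' f' → y ≫ f' = f ≫ x →
    ∃ z : Z ⟶ Z', g ≫ y = z ≫ g' ∧
      (E.obj (op X)).map z δ = (E.map x.op).app Z' δ'
  /-- (ET4) -/
  et4 : ∀ ⦃X Z A : C⦄ ⦃Y B : C⦄
    (δ : (E.obj (op X)).obj Z) (δ' : (E.obj (op A)).obj Y)
    (g : Z ⟶ Y) (f : Y ⟶ X) (b : Y ⟶ B) (a : B ⟶ A),
    Real δ g f → Real δ' b a →
    ∃ (Cc : C) (f' : B ⟶ Cc) (b' : X ⟶ Cc) (a' : Cc ⟶ A)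
      (δ'' : (E.obj (op Cc)).obj Z),
      Real δ'' (g ≫ b) f' ∧
      f ≫ b' = b ≫ f' ∧ f' ≫ a' = a ∧
      Real ((E.obj (op A)).map f δ') b' a' ∧
      (E.map b'.op).app Z δ'' = δ ∧
      (E.obj (op Cc)).map g δ'' = (E.map a'.op).app Y δ'
  /-- (ET4)ᵒᵖ -/
  et4op : ∀ ⦃X Y Z A B : C⦄
    (δ : (E.obj (op Z)).obj X) (δ' : (E.obj (op Y)).obj A)
    (f : X ⟶ Y) (g : Y ⟶ Z) (m : A ⟶ B) (n : B ⟶ Y),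
    Real δ f g → Real δ' m n →
    ∃ (Cc : C) (f' : Cc ⟶ B) (b' : Cc ⟶ X) (a' : A ⟶ Cc)
      (δ'' : (E.obj (op Z)).obj Cc),
      Real δ'' f' (n ≫ g) ∧
      b' ≫ f = f' ≫ n ∧ a' ≫ f' = m ∧
      Real ((E.map f.op).app A δ') a' b' ∧
      (E.obj (op Z)).map b' δ'' = δ ∧
      (E.map g.op).app Cc δ'' = (E.obj (op Y)).map a' δ'

namespace Extriangulated

variable {C : Type u} [Category.{v} C] [Preadditive C]
  [HasZeroObject C] [HasBinaryBiproducts C] (ET : Extriangulated C)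

/-- `(g, f)` is a conflation. -/
def IsConflation ⦃Z Y X : C⦄ (g : Z ⟶ Y) (f : Y ⟶ X) : Prop :=
  ∃ δ : ((ET.E.obj (op X)).obj Z), ET.Real δ g f

/-- `f` is a deflation. -/
def IsDeflation ⦃Y X : C⦄ (f : Y ⟶ X) : Prop :=
  ∃ (Z : C) (g : Z ⟶ Y), ET.IsConflation g f

/-- `g` is an inflation. -/
def IsInflation ⦃Z Y : C⦄ (g : Z ⟶ Y) : Prop :=
  ∃ (X : C) (f : Y ⟶ X), ET.IsConflation g f

end Extriangulated


variable {C : Type u} [Category.{v} C] [Preadditive C]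
  [HasZeroObject C] [HasBinaryBiproducts C]

/-- A `C`-module `F` is effaceable if every element of `F` is killed by some
deflation. -/
def IsEffaceable (ET : Extriangulated C) (F : Mod C) : Prop :=
  ∀ (X : C) (x : F.obj (op X)), ∃ (Y : C) (α : Y ⟶ X),
    ET.IsDeflation α ∧ F.map α.op x = 0

/-- A `C`-module `F` is a defect if for some conflation `Z ⟶ Y ⟶ X` there is
an exact sequence `Hom(-,Z) ⟶ Hom(-,Y) ⟶ Hom(-,X) ⟶ F ⟶ 0`, i.e. `F` is the
cokernel of `Hom(-,Y) ⟶ Hom(-,X)` (expressed pointwise). -/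
def IsDefect (ET : Extriangulated C) (F : Mod C) : Prop :=
  ∃ (Z Y X : C) (g : Z ⟶ Y) (f : Y ⟶ X), ET.IsConflation g f ∧
    ∃ p : preadditiveYoneda.obj X ⟶ F,
      (∀ W : Cᵒᵖ, Function.Surjective (p.app W)) ∧
      (∀ (W : C) (h : W ⟶ X), p.app (op W) h = 0 ↔ ∃ k : W ⟶ Y, k ≫ f = h)

/-- A `C`-module `F` is left exact if it sends every conflation `Z ⟶ Y ⟶ X`
to an exact sequence `0 ⟶ F(X) ⟶ F(Y) ⟶ F(Z)`. -/
def IsLeftExact (ET : Extriangulated C) (F : Mod C) : Prop :=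
  ∀ ⦃Z Y X : C⦄ (g : Z ⟶ Y) (f : Y ⟶ X), ET.IsConflation g f →
    Function.Injective (F.map f.op) ∧
    ∀ y : F.obj (op Y), F.map g.op y = 0 ↔ ∃ x : F.obj (op X), F.map f.op x = y

/-- Compositions of deflations are deflations (via (ET4)ᵒᵖ). -/
lemma deflation_comp {C : Type u} [Category.{v} C] [Preadditive C] [HasZeroObject C]
    [HasBinaryBiproducts C] (ET : Extriangulated C) {B Y X : C} {β : B ⟶ Y} {α : Y ⟶ X}
    (hβ : ET.IsDeflation β) (hα : ET.IsDeflation α) : ET.IsDeflation (β ≫ α) := by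
  obtain ⟨K, f, δ, hδ⟩ := hα
  obtain ⟨A, m, δ', hδ'⟩ := hβ
  obtain ⟨Cc, f', b', a', δ'', h1, -⟩ := ET.et4op δ δ' f α m β hδ hδ'
  exact ⟨Cc, f', δ'', h1⟩

/-- For an extriangulated category with weak kernels, the effaceable
finitely presented functors form a Serre subcategory of `mod C`: they are
closed under subobjects, quotient objects, and extensions (exactness in
`mod C` being pointwise). -/
theorem effaceable_is_serre
    {C : Type u} [Category.{v} C] [Preadditive C] [HasZeroObject C]
    [HasBinaryBiproducts C] (ET : Extriangulated C) (hwk : HasWeakKernels C) :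
    (∀ (F G : Mod C), IsFinitelyPresented F → IsFinitelyPresented G →
      ∀ i : F ⟶ G, (∀ W, Function.Injective (i.app W)) →
        IsEffaceable ET G → IsEffaceable ET F) ∧
    (∀ (F G : Mod C), IsFinitelyPresented F → IsFinitelyPresented G →
      ∀ p : F ⟶ G, (∀ W, Function.Surjective (p.app W)) →
        IsEffaceable ET F → IsEffaceable ET G) ∧
    (∀ (F G H : Mod C), IsFinitelyPresented F → IsFinitelyPresented G →
      IsFinitelyPresented H → ∀ (i : F ⟶ G) (p : G ⟶ H),
        (∀ W, Function.Injective (i.app W)) →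
        (∀ W, Function.Surjective (p.app W)) →
        (∀ (W : Cᵒᵖ) (y : G.obj W), p.app W y = 0 ↔ ∃ x, i.app W x = y) →
        IsEffaceable ET F → IsEffaceable ET H → IsEffaceable ET G) := by
  refine ⟨?_, ?_, ?_⟩
  · -- subobjects
    intro F G _ _ i hi hG X x
    obtain ⟨Y, α, hα, h0⟩ := hG X (i.app (op X) x)
    refine ⟨Y, α, hα, hi (op Y) ?_⟩
    have hnat : i.app (op Y) (F.map α.op x) = G.map α.op (i.app (op X) x) := by
      rw [← comp_apply, ← comp_apply, i.naturality]
    rw [map_zero]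
    exact hnat.trans h0
  · -- quotients
    intro F G _ _ p hp hF X x
    obtain ⟨y, hy⟩ := hp (op X) x
    obtain ⟨Y, α, hα, h0⟩ := hF X y
    refine ⟨Y, α, hα, ?_⟩
    have hnat : p.app (op Y) (F.map α.op y) = G.map α.op (p.app (op X) y) := by
      rw [← comp_apply, ← comp_apply, p.naturality]
    calc G.map α.op x = G.map α.op (p.app (op X) y) := by rw [hy]
      _ = p.app (op Y) (F.map α.op y) := hnat.symm
      _ = 0 := by rw [h0, map_zero]
  · -- extensions
    intro F G H _ _ _ i p hi hp hexact hF hH X x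
    obtain ⟨Y, α, hα, h0⟩ := hH X (p.app (op X) x)
    have hnat : p.app (op Y) (G.map α.op x) = H.map α.op (p.app (op X) x) := by
      rw [← comp_apply, ← comp_apply, p.naturality]
    have : p.app (op Y) (G.map α.op x) = 0 := hnat.trans h0
    obtain ⟨x', hx'⟩ := (hexact (op Y) (G.map α.op x)).mp this
    obtain ⟨Y', β, hβ, h0'⟩ := hF Y x'
    refine ⟨Y', β ≫ α, deflation_comp ET hβ hα, ?_⟩
    have hnat' : i.app (op Y') (F.map β.op x') = G.map β.op (i.app (op Y) x') := by
      rw [← comp_apply, ← comp_apply, i.naturality]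
    calc G.map (β ≫ α).op x = G.map β.op (G.map α.op x) := by
          rw [op_comp, G.map_comp]; rfl
      _ = G.map β.op (i.app (op Y) x') := by rw [hx']
      _ = i.app (op Y') (F.map β.op x') := hnat'.symm
      _ = 0 := by rw [h0', map_zero]

end PaperStmt

end
end

section
/- Let C be an extriangulated category with weak kernels. Then the full subcategory def C of defects in mod C is closed under taking kernels and cokernels of morphisms in mod C. -/
open CategoryTheory CategoryTheory.Limits Opposite

universe w' w v u

noncomputable section

namespace PaperStmt

variable {C : Type u} [Category.{v} C] [Preadditive C]

variable {C : Type u} [Category.{v} C] [Preadditive C]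
  [HasZeroObject C] [HasBinaryBiproducts C]

section Aux

variable {C : Type u} [Category.{v} C] [Preadditive C]

/-- Subgroup of morphisms `W ⟶ U` factoring through `d : V ⟶ U`. -/
def factorSub {V U : C} (d : V ⟶ U) (W : C) : AddSubgroup (W ⟶ U) where
  carrier := {t | ∃ s : W ⟶ V, s ≫ d = t}
  add_mem' := by rintro a b ⟨s, rfl⟩ ⟨s', rfl⟩; exact ⟨s + s', by simp [Preadditive.add_comp]⟩
  zero_mem' := ⟨0, by simp⟩
  neg_mem' := by rintro a ⟨s, rfl⟩; exact ⟨-s, by simp⟩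

lemma mem_factorSub {V U W : C} {d : V ⟶ U} {t : W ⟶ U} :
    t ∈ factorSub d W ↔ ∃ s : W ⟶ V, s ≫ d = t := Iff.rfl

def precompHom {U W W' : C} (u : W' ⟶ W) : (W ⟶ U) →+ (W' ⟶ U) :=
  AddMonoidHom.mk' (fun t => u ≫ t) (fun a b => by simp [Preadditive.comp_add])

def postcompHom {W U V : C} (d : U ⟶ V) : (W ⟶ U) →+ (W ⟶ V) :=
  AddMonoidHom.mk' (fun t => t ≫ d) (fun a b => by simp [Preadditive.add_comp])

def toAddHom {A B : AddCommGrpCat.{w}} (f : A ⟶ B) : (A : Type w) →+ (B : Type w) := f.hom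

/-- Quotient of the yoneda functor of `U` by morphisms factoring through `d`. -/
def QuotF {V U : C} (d : V ⟶ U) : Mod C where
  obj W := AddCommGrpCat.of ((unop W ⟶ U) ⧸ factorSub d (unop W))
  map {W W'} u := AddCommGrpCat.ofHom <| QuotientAddGroup.map _ _ (precompHom u.unop)
    (by rintro t ⟨s, rfl⟩; exact ⟨u.unop ≫ s, by simp [precompHom]⟩)
  map_id W := by
    ext z
    simp [precompHom, QuotientAddGroup.map_mk]
  map_comp u v := by
    ext z
    show QuotientAddGroup.mk ((u ≫ v).unop ≫ z) = QuotientAddGroup.mk (v.unop ≫ u.unop ≫ z)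
    rw [unop_comp, Category.assoc]

lemma QuotF_map_mk {V U : C} (d : V ⟶ U) {W W' : Cᵒᵖ} (u : W ⟶ W') (z : unop W ⟶ U) :
    (QuotF d).map u (QuotientAddGroup.mk z) = QuotientAddGroup.mk (u.unop ≫ z) := rfl

/-- The projection onto the quotient functor. -/
def pQuot {V U : C} (d : V ⟶ U) : preadditiveYoneda.obj U ⟶ QuotF d where
  app W := AddCommGrpCat.ofHom (QuotientAddGroup.mk' (factorSub d (unop W)))
  naturality W W' u := rfl

lemma pQuot_apply {V U : C} (d : V ⟶ U) (W : Cᵒᵖ) (t : unop W ⟶ U) :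
    (pQuot d).app W t = QuotientAddGroup.mk t := rfl

lemma pQuot_surjective {V U : C} (d : V ⟶ U) (W : Cᵒᵖ) :
    Function.Surjective ((pQuot d).app W) := fun a =>
  QuotientAddGroup.induction_on a fun z => ⟨z, rfl⟩

lemma pQuot_zero_iff {V U : C} (d : V ⟶ U) (W : C) (t : W ⟶ U) :
    (pQuot d).app (op W) t = 0 ↔ ∃ s : W ⟶ V, s ≫ d = t := by
  rw [pQuot_apply]
  exact (QuotientAddGroup.eq_zero_iff t)

lemma natapp {F G : Mod C} (η : F ⟶ G) {W W' : Cᵒᵖ} (u : W ⟶ W') (a : F.obj W) :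
    η.app W' (F.map u a) = G.map u (η.app W a) := by
  have h := η.naturality u
  exact congrFun (congrArg (fun (q : F.obj W ⟶ G.obj W') => ⇑q) h) a

lemma yoneda_map_apply {U : C} {W W' : Cᵒᵖ} (u : W ⟶ W') (t : unop W ⟶ U) :
    (preadditiveYoneda.obj U).map u t = u.unop ≫ t := rfl

section ET
open ZeroObject
variable [HasZeroObject C] [HasBinaryBiproducts C] (ET : Extriangulated C)

/-- `0 ⟶ W ⟶ W` is a conflation. -/
lemma real_zero_id (W : C) :
    ET.Real (0 : ((ET.E.obj (op W)).obj 0)) (0 : (0 : C) ⟶ W) (𝟙 W) := by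
  have h := ET.real_zero W (0 : C)
  have hinv : biprod.snd ≫ biprod.inr = 𝟙 ((0 : C) ⊞ W) := by
    apply biprod.hom_ext'
    · exact (Limits.isZero_zero C).eq_of_src _ _
    · simp
  let i : ((0 : C) ⊞ W) ≅ W :=
    ⟨biprod.snd, biprod.inr, hinv, by simp⟩
  have h2 := ET.real_of_iso _ _ _ i h
  have e1 : (biprod.inl : (0:C) ⟶ _) ≫ i.hom = 0 := by simp [i]
  have e2 : i.inv ≫ (biprod.snd : (0:C) ⊞ W ⟶ W) = 𝟙 W := by simp [i]
  rwa [e1, e2] at h2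

/-- `W ⟶ W ⟶ 0` is a conflation. -/
lemma real_id_zero (W : C) :
    ET.Real (0 : ((ET.E.obj (op (0 : C))).obj W)) (𝟙 W) (0 : W ⟶ (0 : C)) := by
  have h := ET.real_zero (0 : C) W
  have hinv : biprod.fst ≫ biprod.inl = 𝟙 (W ⊞ (0 : C)) := by
    apply biprod.hom_ext
    · simp
    · exact (Limits.isZero_zero C).eq_of_tgt _ _
  let i : (W ⊞ (0 : C)) ≅ W := ⟨biprod.fst, biprod.inl, hinv, by simp⟩
  have h2 := ET.real_of_iso _ _ _ i h
  have e1 : (biprod.inl : W ⟶ W ⊞ (0:C)) ≫ i.hom = 𝟙 W := by simp [i]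
  have e2 : i.inv ≫ (biprod.snd : W ⊞ (0:C) ⟶ (0:C)) = 0 := by
    exact (Limits.isZero_zero C).eq_of_tgt _ _
  rwa [e1, e2] at h2

/-- Pulling back an extension along its own deflation gives zero. -/
lemma pull_defl_zero {Z Y X : C} {δ : (ET.E.obj (op X)).obj Z} {g : Z ⟶ Y} {f : Y ⟶ X}
    (hr : ET.Real δ g f) : (ET.E.map f.op).app Z δ = 0 := by
  obtain ⟨z, _, heq⟩ := ET.et3op (0 : (ET.E.obj (op Y)).obj 0) δ
    (0 : (0 : C) ⟶ Y) (𝟙 Y) g f (𝟙 Y) f (real_zero_id ET Y) hr (by simp)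
  rw [← heq, map_zero]

/-- Pulling back an extension along anything factoring through its deflation gives zero. -/
lemma pull_factor_zero {Z Y X W : C} {δ : (ET.E.obj (op X)).obj Z} {g : Z ⟶ Y} {f : Y ⟶ X}
    (hr : ET.Real δ g f) (k : W ⟶ Y) (h : W ⟶ X) (hk : k ≫ f = h) :
    (ET.E.map h.op).app Z δ = 0 := by
  subst hk
  rw [op_comp, ET.E.map_comp]
  show (ET.E.map k.op).app Z ((ET.E.map f.op).app Z δ) = 0
  rw [pull_defl_zero ET hr, map_zero]

/-- If the pullback of an extension along `h` vanishes, `h` factors through the deflation. -/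
lemma factor_of_pull_zero {Z Y X W : C} {δ : (ET.E.obj (op X)).obj Z} {g : Z ⟶ Y} {f : Y ⟶ X}
    (hr : ET.Real δ g f) (h : W ⟶ X) (hz : (ET.E.map h.op).app Z δ = 0) :
    ∃ k : W ⟶ Y, k ≫ f = h := by
  obtain ⟨y, _, hy2⟩ := ET.real_lift (0 : (ET.E.obj (op W)).obj Z) δ
    biprod.inl biprod.snd g f (𝟙 Z) h (ET.real_zero W Z) hr
    (by rw [hz, CategoryTheory.Functor.map_id]; rfl)
  exact ⟨biprod.inr ≫ y, by rw [Category.assoc, hy2, biprod.inr_snd_assoc]⟩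

/-- If `f'` is a deflation and `x` is arbitrary, then `biprod.desc x f'` is a deflation. -/
lemma desc_defl {X Z' Y' X' : C} (δ' : (ET.E.obj (op X')).obj Z') {g' : Z' ⟶ Y'} {f' : Y' ⟶ X'}
    (hδ' : ET.Real δ' g' f') (x : X ⟶ X') :
    ∃ (N : C) (n : N ⟶ X ⊞ Y') (δn : (ET.E.obj (op X')).obj N),
      ET.Real δn n (biprod.desc x f') := by
  set A : X ⊞ X' ⟶ X ⊞ X' := biprod.lift biprod.fst (biprod.desc x (𝟙 X')) with hA
  set B : X ⊞ X' ⟶ X ⊞ X' := biprod.lift biprod.fst (biprod.desc (-x) (𝟙 X')) with hB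
  have hAB : A ≫ B = 𝟙 (X ⊞ X') := by
    apply biprod.hom_ext' <;> apply biprod.hom_ext <;>
      simp [hA, hB, Preadditive.comp_add, Preadditive.comp_neg]
  have hBA : B ≫ A = 𝟙 (X ⊞ X') := by
    apply biprod.hom_ext' <;> apply biprod.hom_ext <;>
      simp [hA, hB, Preadditive.comp_add, Preadditive.comp_neg]
  have h1 := ET.real_of_iso _ _ _ (⟨B, A, hBA, hAB⟩ : (X ⊞ X') ≅ (X ⊞ X'))
    (ET.real_zero X' X)
  have eA : (⟨B, A, hBA, hAB⟩ : (X ⊞ X') ≅ (X ⊞ X')).inv ≫ (biprod.snd : X ⊞ X' ⟶ X') =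
      biprod.desc x (𝟙 X') := by
    show A ≫ biprod.snd = _
    rw [hA, biprod.lift_snd]
  rw [eA] at h1
  have hadd := ET.real_add (0 : (ET.E.obj (op X)).obj (0 : C)) δ'
    (0 : (0 : C) ⟶ X) (𝟙 X) g' f' (real_zero_id ET X) hδ'
  obtain ⟨Cc, f'', b', a', δ₅, hreal, -, -, -, -, -⟩ :=
    ET.et4op _ _ (biprod.inl ≫ B) (biprod.desc x (𝟙 X'))
      (biprod.map (0 : (0 : C) ⟶ X) g') (biprod.map (𝟙 X) f') h1 hadd
  have hcomp : (biprod.map (𝟙 X) f') ≫ biprod.desc x (𝟙 X') = biprod.desc x f' := by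
    apply biprod.hom_ext' <;> simp
  rw [hcomp] at hreal
  exact ⟨Cc, f'', δ₅, hreal⟩

end ET

end Aux

/-- For an extriangulated category with weak kernels, the subcategory of
defects is closed under taking kernels and cokernels of morphisms in
`mod C` (kernels and cokernels being computed pointwise). -/
theorem defect_closed_under_kernels_cokernels
    {C : Type u} [Category.{v} C] [Preadditive C] [HasZeroObject C]
    [HasBinaryBiproducts C] (ET : Extriangulated C) (hwk : HasWeakKernels C)
    (F G : Mod C) (hF : IsDefect ET F) (hG : IsDefect ET G) (α : F ⟶ G) :
    (∃ (K : Mod C) (κ : K ⟶ F), IsDefect ET K ∧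
      (∀ W, Function.Injective (κ.app W)) ∧
      (∀ (W : Cᵒᵖ) (x : F.obj W), α.app W x = 0 ↔ ∃ k, κ.app W k = x)) ∧
    (∃ (Q : Mod C) (π : G ⟶ Q), IsDefect ET Q ∧
      (∀ W, Function.Surjective (π.app W)) ∧
      (∀ (W : Cᵒᵖ) (y : G.obj W), π.app W y = 0 ↔ ∃ x, α.app W x = y)) := by
  classical
  obtain ⟨Z, Y, X, g, f, ⟨δ, hδ⟩, p, hps, hpk⟩ := hF
  obtain ⟨Z', Y', X', g', f', ⟨δ', hδ'⟩, p', hps', hpk'⟩ := hG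
  -- the comparison morphism x : X ⟶ X'
  obtain ⟨x, hx⟩ : ∃ x : X ⟶ X', p'.app (op X) x = α.app (op X) (p.app (op X) (𝟙 X)) :=
    hps' (op X) (α.app (op X) (p.app (op X) (𝟙 X)))
  have key : ∀ (W : Cᵒᵖ) (h : unop W ⟶ X), α.app W (p.app W h) = p'.app W (h ≫ x) := by
    intro W h
    have e1 : p.app W h = F.map h.op (p.app (op X) (𝟙 X)) := by
      have e := natapp p h.op (𝟙 X)
      rw [yoneda_map_apply] at e
      simpa using e
    calc α.app W (p.app W h)
        = α.app W (F.map h.op (p.app (op X) (𝟙 X))) := by rw [e1]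
      _ = G.map h.op (α.app (op X) (p.app (op X) (𝟙 X))) := natapp α h.op _
      _ = G.map h.op (p'.app (op X) x) := by rw [hx]
      _ = p'.app W ((preadditiveYoneda.obj X').map h.op x) := (natapp p' h.op x).symm
      _ = p'.app W (h ≫ x) := rfl
  have hpf' : ∀ (W : Cᵒᵖ) (k : unop W ⟶ Y'), p'.app W (k ≫ f') = 0 :=
    fun W k => (hpk' (unop W) (k ≫ f')).2 ⟨k, rfl⟩
  -- pullback conflation δ'' realized by (q₁, q₂)
  set δ'' := (ET.E.map x.op).app Z' δ' with hδ''def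
  obtain ⟨Q, q₁, q₂, hQ⟩ := ET.real_exists δ''
  obtain ⟨m, _, hm⟩ := ET.real_lift δ'' δ' q₁ q₂ g' f' (𝟙 Z') x hQ hδ'
    (by rw [CategoryTheory.Functor.map_id]; rfl)
  have char1 : ∀ ⦃W : C⦄ (h : W ⟶ X),
      (∃ t : W ⟶ Q, t ≫ q₂ = h) ↔ (∃ k : W ⟶ Y', k ≫ f' = h ≫ x) := by
    intro W h
    constructor
    · rintro ⟨t, rfl⟩
      exact ⟨t ≫ m, by rw [Category.assoc, hm, ← Category.assoc]⟩
    · rintro ⟨k, hk⟩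
      refine factor_of_pull_zero ET hQ h ?_
      have e : (ET.E.map h.op).app Z' δ'' = (ET.E.map (h ≫ x).op).app Z' δ' := by
        rw [op_comp, ET.E.map_comp]; rfl
      rw [e, ← hk]
      exact pull_factor_zero ET hδ' k _ rfl
  -- pullback conflation δ₃ realized by (r₁, r₂)
  set δ₃ := (ET.E.map q₂.op).app Z δ with hδ₃def
  obtain ⟨R, r₁, r₂, hR⟩ := ET.real_exists δ₃
  obtain ⟨m₂, _, hm₂⟩ := ET.real_lift δ₃ δ r₁ r₂ g f (𝟙 Z) q₂ hR hδ
    (by rw [CategoryTheory.Functor.map_id]; rfl)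
  have char2 : ∀ ⦃W : C⦄ (t : W ⟶ Q),
      (∃ s : W ⟶ R, s ≫ r₂ = t) ↔ (∃ k : W ⟶ Y, k ≫ f = t ≫ q₂) := by
    intro W t
    constructor
    · rintro ⟨s, rfl⟩
      exact ⟨s ≫ m₂, by rw [Category.assoc, hm₂, ← Category.assoc]⟩
    · rintro ⟨k, hk⟩
      refine factor_of_pull_zero ET hR t ?_
      have e : (ET.E.map t.op).app Z δ₃ = (ET.E.map (t ≫ q₂).op).app Z δ := by
        rw [op_comp, ET.E.map_comp]; rfl
      rw [e, ← hk]
      exact pull_factor_zero ET hδ k _ rfl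
  constructor
  · -- kernels
    have hkillK : ∀ (W : Cᵒᵖ), ∀ t ∈ factorSub r₂ (unop W),
        (toAddHom (p.app W)).comp (postcompHom q₂) t = 0 := by
      intro W t ht
      obtain ⟨k, hk⟩ := (char2 t).1 ht
      exact (hpk (unop W) (t ≫ q₂)).2 ⟨k, hk⟩
    let κapp : ∀ W : Cᵒᵖ, (QuotF r₂).obj W ⟶ F.obj W := fun W =>
      AddCommGrpCat.ofHom (QuotientAddGroup.lift (factorSub r₂ (unop W))
        ((toAddHom (p.app W)).comp (postcompHom q₂)) (hkillK W))
    have κapp_mk : ∀ (W : Cᵒᵖ) (t : unop W ⟶ Q),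
        κapp W (QuotientAddGroup.mk t) = p.app W (t ≫ q₂) := fun _ _ => rfl
    have κnat : ∀ {W W' : Cᵒᵖ} (u : W ⟶ W'),
        (QuotF r₂).map u ≫ κapp W' = κapp W ≫ F.map u := by
      intro W W' u
      ext t
      refine QuotientAddGroup.induction_on t fun z => ?_
      show p.app W' ((u.unop ≫ z) ≫ q₂) = F.map u (p.app W (z ≫ q₂))
      rw [← natapp p u (z ≫ q₂), yoneda_map_apply, Category.assoc]
    refine ⟨QuotF r₂, ⟨κapp, fun {W W'} u => κnat u⟩, ?_, ?_, ?_⟩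
    · exact ⟨Z, R, Q, r₁, r₂, ⟨δ₃, hR⟩, pQuot r₂, pQuot_surjective r₂,
        fun W t => pQuot_zero_iff r₂ W t⟩
    · intro W
      have hker : ∀ c : (QuotF r₂).obj W, κapp W c = 0 → c = 0 := by
        intro c
        refine QuotientAddGroup.induction_on c fun t ht => ?_
        have h0 : p.app W (t ≫ q₂) = 0 := ht
        obtain ⟨k, hk⟩ := (hpk (unop W) (t ≫ q₂)).1 h0
        obtain ⟨s, hs⟩ := (char2 t).2 ⟨k, hk⟩
        exact (QuotientAddGroup.eq_zero_iff t).2 ⟨s, hs⟩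
      intro a b hab
      have h2 := hker (a - b) (by rw [map_sub, hab, sub_self])
      exact sub_eq_zero.1 h2
    · intro W a
      obtain ⟨h, rfl⟩ := hps W a
      constructor
      · intro h0
        rw [key W h] at h0
        obtain ⟨k', hk'⟩ := (hpk' (unop W) (h ≫ x)).1 h0
        obtain ⟨t, ht⟩ := (char1 h).2 ⟨k', hk'⟩
        exact ⟨QuotientAddGroup.mk t, by rw [κapp_mk, ht]⟩
      · rintro ⟨c, hc⟩
        rw [← hc]
        refine QuotientAddGroup.induction_on c fun t => ?_
        rw [κapp_mk, key W (t ≫ q₂)]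
        have e : (t ≫ q₂) ≫ x = (t ≫ m) ≫ f' := by
          rw [Category.assoc, Category.assoc, hm]
        rw [e]
        exact hpf' W (t ≫ m)
  · -- cokernels
    set d : X ⊞ Y' ⟶ X' := biprod.desc x f' with hd
    obtain ⟨N, n, δn, hn⟩ := desc_defl ET δ' hδ' x
    have hker_sub : ∀ (W : Cᵒᵖ) (h : unop W ⟶ X'), p'.app W h = 0 →
        h ∈ factorSub d (unop W) := by
      intro W h h0
      obtain ⟨k, hk⟩ := (hpk' (unop W) h).1 h0
      exact ⟨k ≫ biprod.inr, by rw [Category.assoc, hd, biprod.inr_desc, hk]⟩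
    have mkd_eq : ∀ (W : Cᵒᵖ) (a b : unop W ⟶ X'), p'.app W a = p'.app W b →
        (QuotientAddGroup.mk a : _ ⧸ factorSub d (unop W)) = QuotientAddGroup.mk b := by
      intro W a b hab
      have h0 : p'.app W (a - b) = 0 := by erw [map_sub, hab, sub_self]
      have h1 : (QuotientAddGroup.mk (a - b) : _ ⧸ factorSub d (unop W)) = 0 :=
        (QuotientAddGroup.eq_zero_iff _).2 (hker_sub W _ h0)
      rw [QuotientAddGroup.mk_sub] at h1
      exact sub_eq_zero.1 h1
    let σ : ∀ W : Cᵒᵖ, G.obj W → (unop W ⟶ X') := fun W => Function.surjInv (hps' W)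
    have hσ : ∀ (W : Cᵒᵖ) (a : G.obj W), p'.app W (σ W a) = a :=
      fun W a => Function.surjInv_eq (hps' W) a
    let πapp : ∀ W : Cᵒᵖ, G.obj W ⟶ (QuotF d).obj W := fun W =>
      AddCommGrpCat.ofHom (AddMonoidHom.mk'
        (fun a => (QuotientAddGroup.mk (σ W a) : _ ⧸ factorSub d (unop W)))
        (fun a b => by
          show (QuotientAddGroup.mk (σ W (a + b)) : _ ⧸ factorSub d (unop W)) =
            QuotientAddGroup.mk (σ W a) + QuotientAddGroup.mk (σ W b)
          rw [← QuotientAddGroup.mk_add]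
          exact mkd_eq W _ _ (by erw [hσ, map_add, hσ, hσ])))
    have πapp_eq : ∀ (W : Cᵒᵖ) (h : unop W ⟶ X'),
        πapp W (p'.app W h) = QuotientAddGroup.mk h := by
      intro W h
      exact mkd_eq W _ _ (by rw [hσ])
    have πnat : ∀ {W W' : Cᵒᵖ} (u : W ⟶ W'),
        G.map u ≫ πapp W' = πapp W ≫ (QuotF d).map u := by
      intro W W' u
      ext a
      show (QuotientAddGroup.mk (σ W' (G.map u a)) : _ ⧸ factorSub d (unop W')) =
        QuotientAddGroup.mk (u.unop ≫ σ W a)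
      apply mkd_eq
      have e := natapp p' u (σ W a)
      rw [yoneda_map_apply] at e
      rw [hσ, e, hσ]
    refine ⟨QuotF d, ⟨πapp, fun {W W'} u => πnat u⟩, ?_, ?_, ?_⟩
    · exact ⟨N, X ⊞ Y', X', n, d, ⟨δn, hn⟩, pQuot d, pQuot_surjective d,
        fun W t => pQuot_zero_iff d W t⟩
    · intro W a2
      refine QuotientAddGroup.induction_on a2 fun h => ?_
      exact ⟨p'.app W h, πapp_eq W h⟩
    · intro W a2
      obtain ⟨h, rfl⟩ : ∃ h : unop W ⟶ X', p'.app W h = a2 := hps' W a2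
      constructor
      · intro h0
        have e : (QuotientAddGroup.mk h : _ ⧸ factorSub d (unop W)) = 0 := by
          rw [← πapp_eq W h]; exact h0
        obtain ⟨k, hk⟩ := (QuotientAddGroup.eq_zero_iff h).1 e
        refine ⟨p.app W (k ≫ biprod.fst), ?_⟩
        rw [key W (k ≫ biprod.fst)]
        have hdesc : d = biprod.fst ≫ x + biprod.snd ≫ f' := by
          rw [hd]
          apply biprod.hom_ext' <;> simp [Preadditive.comp_add]
        have e2 : p'.app W h = p'.app W ((k ≫ biprod.fst) ≫ x) := by
          rw [← hk, hdesc, Preadditive.comp_add, ← Category.assoc, ← Category.assoc]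
          erw [map_add, hpf' W (k ≫ biprod.snd), add_zero]
        exact e2.symm
      · rintro ⟨b, hb⟩
        obtain ⟨h2, rfl⟩ : ∃ h2 : unop W ⟶ X, p.app W h2 = b := hps W b
        rw [key W h2] at hb
        rw [← hb, πapp_eq W (h2 ≫ x)]
        exact (QuotientAddGroup.eq_zero_iff _).2
          ⟨h2 ≫ biprod.inl, by rw [Category.assoc, hd, biprod.inl_desc]⟩

end PaperStmt

end
end

section
/- Let C be an extriangulated category with weak kernels. Then a finitely presented functor F ∈ mod C is effaceable if and only if F is isomorphic to a defect, i.e., eff C = def C as subcategories of mod C. In particular, def C is a Serre subcategory of mod C. -/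
open CategoryTheory CategoryTheory.Limits Opposite

universe w' w v u

noncomputable section

namespace PaperStmt

variable {C : Type u} [Category.{v} C] [Preadditive C]

variable {C : Type u} [Category.{v} C] [Preadditive C]
  [HasZeroObject C] [HasBinaryBiproducts C]

section Aux
variable {D : Type*} [Category D] [Preadditive D] [HasZeroObject D] [HasBinaryBiproducts D]
open ZeroObject

/-- The shear isomorphism `[[1,0],[-f,1]]` on `Y₀ ⊞ X`. -/
def isoA {Y₀ X : D} (f : Y₀ ⟶ X) : Y₀ ⊞ X ≅ Y₀ ⊞ X where
  hom := biprod.desc (biprod.lift (𝟙 Y₀) (-f)) biprod.inr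
  inv := biprod.desc (biprod.lift (𝟙 Y₀) f) biprod.inr
  hom_inv_id := by apply biprod.hom_ext' <;> apply biprod.hom_ext <;> simp
  inv_hom_id := by apply biprod.hom_ext' <;> apply biprod.hom_ext <;> simp

lemma snd_inr_zero (Y : D) : (biprod.snd : (0:D) ⊞ Y ⟶ Y) ≫ biprod.inr = 𝟙 _ := by
  apply biprod.hom_ext'
  · exact (isZero_zero D).eq_of_src _ _
  · simp

/-- The canonical isomorphism `(0 ⊞ Y₀) ⊞ Y' ≅ Y₀ ⊞ Y'`. -/
def isoB (Y₀ Y' : D) : ((0:D) ⊞ Y₀) ⊞ Y' ≅ Y₀ ⊞ Y' where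
  hom := biprod.map biprod.snd (𝟙 Y')
  inv := biprod.map biprod.inr (𝟙 Y')
  hom_inv_id := by
    apply biprod.hom_ext' <;> apply biprod.hom_ext <;>
      simp [reassoc_of% (snd_inr_zero (D := D) Y₀), snd_inr_zero]
  inv_hom_id := by apply biprod.hom_ext' <;> apply biprod.hom_ext <;> simp

lemma compA {Y₀ Y' X : D} (f : Y₀ ⟶ X) (α : Y' ⟶ X) :
    biprod.inl ≫ (isoB Y₀ Y').inv ≫ biprod.map biprod.snd α ≫ (isoA f).inv ≫ biprod.snd = f := by
  simp [isoA, isoB, reassoc_of% (snd_inr_zero (D := D) Y₀)]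

lemma compB {Y₀ Y' X : D} (f : Y₀ ⟶ X) (α : Y' ⟶ X) :
    biprod.inr ≫ (isoB Y₀ Y').inv ≫ biprod.map biprod.snd α ≫ (isoA f).inv ≫ biprod.snd = α := by
  simp [isoA, isoB]

end Aux

open ZeroObject in
/-- For an extriangulated category with weak kernels, a finitely presented
functor is effaceable if and only if it is a defect: `eff C = def C`. -/
theorem effaceable_iff_defect
    {C : Type u} [Category.{v} C] [Preadditive C] [HasZeroObject C]
    [HasBinaryBiproducts C] (ET : Extriangulated C) (hwk : HasWeakKernels C)
    (F : Mod C) (hF : IsFinitelyPresented F) :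
    IsEffaceable ET F ↔ IsDefect ET F := by
  classical
  constructor
  · -- effaceable → defect
    intro heff
    obtain ⟨Y₀, X, f, p, hsurj, hker⟩ := hF
    obtain ⟨Y', α, hdefl, hkill⟩ := heff X (p.app (op X) (𝟙 X))
    have hpα : p.app (op Y') α = 0 := by
      have hnat : F.map α.op (p.app (op X) (𝟙 X)) = p.app (op Y') (α ≫ 𝟙 X) := by
        refine (NatTrans.naturality_apply p α.op _).symm.trans ?_
        rfl
      rw [hnat] at hkill
      simpa using hkill
    obtain ⟨k, hk⟩ := (hker Y' α).1 hpα
    obtain ⟨Z, g₀, δ, hδ⟩ := hdefl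
    -- Step A: the split conflation `Y₀ ⟶ Y₀ ⊞ X ⟶ X` twisted by the shear iso.
    have hA : ET.Real (0 : ((ET.E.obj (op X)).obj Y₀))
        (biprod.inl ≫ (isoA f).hom) ((isoA f).inv ≫ biprod.snd) :=
      ET.real_of_iso _ _ _ (isoA f) (ET.real_zero X Y₀)
    -- Step B: the conflation `0 ⊞ Z ⟶ Y₀ ⊞ Y' ⟶ Y₀ ⊞ X`.
    have hzero : ET.Real (0 : ((ET.E.obj (op Y₀)).obj 0)) biprod.inl biprod.snd :=
      ET.real_zero Y₀ 0
    have hadd := ET.real_add (0 : ((ET.E.obj (op Y₀)).obj 0)) δ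
      biprod.inl biprod.snd g₀ α hzero hδ
    have hB := ET.real_of_iso _ (biprod.map biprod.inl g₀) (biprod.map biprod.snd α)
      (isoB Y₀ Y') hadd
    -- Step C: compose the two deflations using (ET4)ᵒᵖ.
    obtain ⟨Cc, f', b', a', δ'', hreal, -, -, -, -, -⟩ :=
      ET.et4op (0 : ((ET.E.obj (op X)).obj Y₀)) _
        (biprod.inl ≫ (isoA f).hom) ((isoA f).inv ≫ biprod.snd)
        (biprod.map biprod.inl g₀ ≫ (isoB Y₀ Y').hom)
        ((isoB Y₀ Y').inv ≫ biprod.map biprod.snd α) hA hB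
    set β : Y₀ ⊞ Y' ⟶ X :=
      ((isoB Y₀ Y').inv ≫ biprod.map biprod.snd α) ≫ ((isoA f).inv ≫ biprod.snd) with hβdef
    have ha : biprod.inl ≫ β = f := by
      simpa [hβdef] using compA f α
    have hb : biprod.inr ≫ β = α := by
      simpa [hβdef] using compB f α
    refine ⟨Cc, Y₀ ⊞ Y', X, f', β, ⟨δ'', hreal⟩, p, hsurj, ?_⟩
    intro W h
    rw [hker W h]
    constructor
    · rintro ⟨k₀, hk₀⟩
      refine ⟨k₀ ≫ biprod.inl, ?_⟩
      rw [Category.assoc, ha, hk₀]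
    · rintro ⟨k', hk'⟩
      refine ⟨k' ≫ biprod.fst + k' ≫ biprod.snd ≫ k, ?_⟩
      have : k' ≫ β = h := hk'
      calc (k' ≫ biprod.fst + k' ≫ biprod.snd ≫ k) ≫ f
          = k' ≫ biprod.fst ≫ f + k' ≫ biprod.snd ≫ (k ≫ f) := by
            simp [Preadditive.add_comp, Category.assoc]
        _ = k' ≫ biprod.fst ≫ (biprod.inl ≫ β) + k' ≫ biprod.snd ≫ (biprod.inr ≫ β) := by
            rw [ha, hb, hk]
        _ = h := by
            have htot : biprod.fst ≫ biprod.inl ≫ β + biprod.snd ≫ biprod.inr ≫ β = β := by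
              apply biprod.hom_ext' <;> simp
            rw [← Preadditive.comp_add, htot, hk']
  · -- defect → effaceable
    rintro ⟨Z, Y, X, g, f, ⟨δ, hδ⟩, p, hsurj, hker⟩
    intro X₀ x
    obtain ⟨h, rfl⟩ := hsurj (op X₀) x
    -- pull back the conflation along `h`
    set δ' : ((ET.E.obj (op X₀)).obj Z) := (ET.E.map h.op).app Z δ with hδ'def
    obtain ⟨V, g', α, hreal'⟩ := ET.real_exists δ'
    obtain ⟨y, -, hy⟩ := ET.real_lift δ' δ g' α g f (𝟙 Z) h hreal' hδ (by
      rw [hδ'def, CategoryTheory.Functor.map_id]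
      rfl)
    refine ⟨V, α, ⟨Z, g', δ', hreal'⟩, ?_⟩
    have hnat : F.map α.op (p.app (op X₀) h) = p.app (op V) (α ≫ h) := by
      rw [← CategoryTheory.comp_apply, ← p.naturality α.op, CategoryTheory.comp_apply]
      rfl
    rw [hnat]
    exact (hker V (α ≫ h)).2 ⟨y, hy⟩

end PaperStmt

end
end

section
/- Let C be an extriangulated category with weak kernels. Then the perpendicular category (def C)^⊥ = {F ∈ mod C : Hom(S,F) = 0 = Ext¹(S,F) for all S ∈ def C} coincides with the full subcategory lex C of left exact functors, i.e., functors F sending every conflation X → Y → Z to an exact sequence 0 → F(Z) → F(Y) → F(X). -/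
open CategoryTheory CategoryTheory.Limits Opposite

universe w' w v u

noncomputable section

namespace PaperStmt

variable {C : Type u} [Category.{v} C] [Preadditive C]

variable {C : Type u} [Category.{v} C] [Preadditive C]
  [HasZeroObject C] [HasBinaryBiproducts C]

/-- `Ext¹(S, F) = 0` in `mod C`, expressed by the splitting of every
(pointwise) short exact sequence `0 ⟶ F ⟶ G ⟶ S ⟶ 0` of finitely presented
functors. -/
def Ext1VanishesFP {C : Type u} [Category.{v} C] [Preadditive C]
    (S F : Mod C) : Prop :=
  ∀ (G : Mod C), IsFinitelyPresented G → ∀ (i : F ⟶ G) (p : G ⟶ S),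
    (∀ W, Function.Injective (i.app W)) → (∀ W, Function.Surjective (p.app W)) →
    (∀ (W : Cᵒᵖ) (y : G.obj W), p.app W y = 0 ↔ ∃ x, i.app W x = y) →
    ∃ r : G ⟶ F, i ≫ r = 𝟙 F

open ZeroObject

lemma real_id_zero_s10 {C : Type u} [Category.{v} C] [Preadditive C] [HasZeroObject C]
    [HasBinaryBiproducts C] (ET : Extriangulated C) (W : C) :
    ET.Real (0 : ((ET.E.obj (op (0 : C))).obj W)) (𝟙 W) (0 : W ⟶ (0 : C)) := by
  have h0 := ET.real_zero (0 : C) W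
  have := ET.real_of_iso (X := (0:C)) (Z := W) 0 biprod.inl biprod.snd
    (Iso.mk biprod.fst biprod.inl
      (biprod.hom_ext _ _ (by simp) ((isZero_zero C).eq_of_tgt _ _)) (by simp)) h0
  simpa using this

lemma conflation_comp_zero {C : Type u} [Category.{v} C] [Preadditive C] [HasZeroObject C]
    [HasBinaryBiproducts C] (ET : Extriangulated C) {Z Y X : C} {g : Z ⟶ Y} {f : Y ⟶ X}
    (hc : ET.IsConflation g f) : g ≫ f = 0 := by
  obtain ⟨δ, hδ⟩ := hc
  obtain ⟨x, hx, -⟩ := ET.et3 (0 : ((ET.E.obj (op (0 : C))).obj Z)) δ (𝟙 Z)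
    (0 : Z ⟶ (0 : C)) g f (𝟙 Z) g (real_id_zero_s10 ET Z) hδ rfl
  simpa using hx

lemma conflation_exact {C : Type u} [Category.{v} C] [Preadditive C] [HasZeroObject C]
    [HasBinaryBiproducts C] (ET : Extriangulated C) {Z Y X : C} {g : Z ⟶ Y} {f : Y ⟶ X}
    (hc : ET.IsConflation g f) {W : C} (h : W ⟶ Y) (hh : h ≫ f = 0) :
    ∃ t : W ⟶ Z, t ≫ g = h := by
  obtain ⟨δ, hδ⟩ := hc
  obtain ⟨z, hz, -⟩ := ET.et3op (0 : ((ET.E.obj (op (0 : C))).obj W)) δ (𝟙 W)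
    (0 : W ⟶ (0 : C)) g f h (0 : (0:C) ⟶ X) (real_id_zero_s10 ET W) hδ (by simp [hh])
  exact ⟨z, by simpa using hz.symm⟩


section FP
variable {C : Type u} [Category.{v} C] [Preadditive C]

lemma fp_map_add {F : Mod C} (hF : IsFinitelyPresented F) {W W' : C}
    (h h' : W' ⟶ W) (x : F.obj (op W)) :
    F.map (h + h').op x = F.map h.op x + F.map h'.op x := by
  obtain ⟨Y₀, X₀, f₀, p, hsurj, -⟩ := hF
  obtain ⟨(u : W ⟶ X₀), hu⟩ := hsurj (op W) x
  have key : ∀ (a : W' ⟶ W), F.map a.op x = p.app (op W') (a ≫ u) := by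
    intro a
    rw [← hu]
    exact (ConcreteCategory.congr_hom (p.naturality a.op) u).symm
  rw [key, key, key, Preadditive.add_comp]
  exact map_add _ _ _

lemma fp_map_zero {F : Mod C} (hF : IsFinitelyPresented F) {W W' : C}
    (x : F.obj (op W)) : F.map (0 : W' ⟶ W).op x = 0 := by
  have := fp_map_add hF (0 : W' ⟶ W) 0 x
  rw [add_zero] at this
  exact left_eq_add.mp this

lemma fp_map_neg {F : Mod C} (hF : IsFinitelyPresented F) {W W' : C}
    (h : W' ⟶ W) (x : F.obj (op W)) : F.map (-h).op x = - F.map h.op x := by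
  have := fp_map_add hF h (-h) x
  rw [add_neg_cancel, fp_map_zero hF] at this
  exact (neg_eq_of_add_eq_zero_right this.symm).symm

lemma fp_map_sub {F : Mod C} (hF : IsFinitelyPresented F) {W W' : C}
    (h h' : W' ⟶ W) (x : F.obj (op W)) :
    F.map (h - h').op x = F.map h.op x - F.map h'.op x := by
  rw [sub_eq_add_neg, fp_map_add hF, fp_map_neg hF, sub_eq_add_neg]

end FP


section Defect
variable {C : Type u} [Category.{v} C] [Preadditive C]

/-- The subgroup of `W ⟶ X` of morphisms factoring through `f`. -/
def facHom {Y X : C} (f : Y ⟶ X) (W : C) : (W ⟶ Y) →+ (W ⟶ X) :=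
  AddMonoidHom.mk' (fun k => k ≫ f) (fun a b => Preadditive.add_comp _ _ _ a b f)

/-- The defect functor of a morphism `f`, `W ↦ (W ⟶ X)/(f ∘ -)`. -/
def defectFunctor {Y X : C} (f : Y ⟶ X) : Mod C where
  obj W := AddCommGrpCat.of ((unop W ⟶ X) ⧸ (facHom f (unop W)).range)
  map {W W'} u := AddCommGrpCat.ofHom (QuotientAddGroup.map _ _
      (AddMonoidHom.mk' (fun h => u.unop ≫ h)
        (fun a b => Preadditive.comp_add _ _ _ u.unop a b))
      (by rintro h ⟨k, rfl⟩; exact ⟨u.unop ≫ k, by simp [facHom]⟩))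
  map_id W := by
    refine AddCommGrpCat.ext fun x => QuotientAddGroup.induction_on x fun h => ?_
    exact congrArg QuotientAddGroup.mk (by simp)
  map_comp {W W' W''} u v := by
    refine AddCommGrpCat.ext fun x => QuotientAddGroup.induction_on x fun h => ?_
    exact congrArg QuotientAddGroup.mk (by simp)

/-- The canonical projection to the defect functor. -/
def defectProj {Y X : C} (f : Y ⟶ X) : preadditiveYoneda.obj X ⟶ defectFunctor f where
  app W := AddCommGrpCat.ofHom (QuotientAddGroup.mk' (facHom f (unop W)).range)
  naturality W W' u := by
    ext h
    rfl

lemma defectProj_surjective {Y X : C} (f : Y ⟶ X) (W : Cᵒᵖ) :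
    Function.Surjective ((defectProj f).app W) := fun s =>
  QuotientAddGroup.induction_on s (fun h => ⟨h, rfl⟩)

lemma defectProj_ker {Y X : C} (f : Y ⟶ X) (W : C) (h : W ⟶ X) :
    (defectProj f).app (op W) h = 0 ↔ ∃ k : W ⟶ Y, k ≫ f = h := by
  rw [show (defectProj f).app (op W) h = ((h : W ⟶ X) : (W ⟶ X) ⧸ (facHom f W).range) from rfl,
    ]
  exact QuotientAddGroup.eq_zero_iff (N := (facHom f W).range) h

end Defect


section MPR
variable {C : Type u} [Category.{v} C] [Preadditive C]

lemma nat_app {A B : Mod C} (τ : A ⟶ B) {W W' : Cᵒᵖ} (u : W ⟶ W') (a : A.obj W) :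
    τ.app W' (A.map u a) = B.map u (τ.app W a) :=
  ConcreteCategory.congr_hom (τ.naturality u) a

variable [HasZeroObject C] [HasBinaryBiproducts C]

lemma lex_hom_zero (ET : Extriangulated C) (F : Mod C)
    (hlex : IsLeftExact ET F) {Z Y X : C} {g : Z ⟶ Y} {f : Y ⟶ X}
    (hconf : ET.IsConflation g f) (S : Mod C) (p : preadditiveYoneda.obj X ⟶ S)
    (hsurjS : ∀ W : Cᵒᵖ, Function.Surjective (p.app W))
    (hkerS : ∀ (W : C) (h : W ⟶ X), p.app (op W) h = 0 ↔ ∃ k : W ⟶ Y, k ≫ f = h)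
    (α : S ⟶ F) : α = 0 := by
  set ψ := p ≫ α with hψdef
  have hψ : ∀ (W : C) (h : W ⟶ X), ψ.app (op W) h = F.map h.op (ψ.app (op X) (𝟙 X)) := by
    intro W h
    have := nat_app ψ h.op (𝟙 X)
    rwa [show (preadditiveYoneda.obj X).map h.op (𝟙 X) = h ≫ 𝟙 X from rfl,
      Category.comp_id] at this
  have hx₀ : F.map f.op (ψ.app (op X) (𝟙 X)) = 0 := by
    rw [← hψ Y f]
    have hp : p.app (op Y) f = 0 := (hkerS Y f).mpr ⟨𝟙 Y, Category.id_comp f⟩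
    show α.app (op Y) (p.app (op Y) f) = 0
    rw [hp]
    exact AddMonoidHom.map_zero _
  have hx0 : ψ.app (op X) (𝟙 X) = 0 := by
    apply (hlex g f hconf).1
    rw [hx₀]
    exact (AddMonoidHom.map_zero _).symm
  apply NatTrans.ext
  funext W
  refine AddCommGrpCat.ext fun s => ?_
  obtain ⟨h, rfl⟩ := hsurjS W s
  show ψ.app W h = _
  have : ψ.app W h = 0 := by
    have := hψ (unop W) h
    rw [this, hx0, AddMonoidHom.map_zero]
  rw [this]
  rfl


lemma lex_ext1 (ET : Extriangulated C) (F : Mod C) (hF : IsFinitelyPresented F)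
    (hlex : IsLeftExact ET F) {Z Y X : C} {g : Z ⟶ Y} {f : Y ⟶ X}
    (hconf : ET.IsConflation g f) (S : Mod C) (p : preadditiveYoneda.obj X ⟶ S)
    (hsurjS : ∀ W : Cᵒᵖ, Function.Surjective (p.app W))
    (hkerS : ∀ (W : C) (h : W ⟶ X), p.app (op W) h = 0 ↔ ∃ k : W ⟶ Y, k ≫ f = h) :
    Ext1VanishesFP S F := by
  intro G hG i pG hinj hsurj hexact
  -- choose a lift of `p (𝟙 X)` along `pG`
  obtain ⟨g₀, hg₀⟩ := hsurj (op X) (p.app (op X) (𝟙 X))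
  -- the "lift" of `p` as a function
  set Q : ∀ (W : Cᵒᵖ), (unop W ⟶ X) → G.obj W := fun W h => G.map h.op g₀ with hQdef
  have hpQ : ∀ (W : Cᵒᵖ) (h : unop W ⟶ X), pG.app W (Q W h) = p.app W h := by
    intro W h
    rw [hQdef]
    rw [nat_app pG h.op g₀, hg₀]
    have := nat_app p h.op (𝟙 X)
    rw [show (preadditiveYoneda.obj X).map h.op (𝟙 X) = h ≫ 𝟙 X from rfl,
      Category.comp_id] at this
    exact this.symm
  have hQadd : ∀ (W : Cᵒᵖ) (h h' : unop W ⟶ X), Q W (h + h') = Q W h + Q W h' :=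
    fun W h h' => fp_map_add hG h h' g₀
  have hQzero : ∀ (W : Cᵒᵖ), Q W (0 : unop W ⟶ X) = 0 := fun W => fp_map_zero hG g₀
  have hQsub : ∀ (W : Cᵒᵖ) (h h' : unop W ⟶ X), Q W (h - h') = Q W h - Q W h' :=
    fun W h h' => fp_map_sub hG h h' g₀
  -- `Q f` lies in the image of `i`
  have hpQf : pG.app (op Y) (Q (op Y) f) = 0 := by
    rw [hpQ (op Y) f]
    exact (hkerS Y f).mpr ⟨𝟙 Y, Category.id_comp f⟩
  obtain ⟨y, hy⟩ := (hexact (op Y) (Q (op Y) f)).mp hpQf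
  -- `F g y = 0`, hence `y = F f x₀` by left exactness
  have hgy : F.map g.op y = 0 := by
    apply hinj (op Z)
    rw [nat_app i g.op y, hy, AddMonoidHom.map_zero]
    show G.map g.op (G.map f.op g₀) = 0
    have hcomp : G.map (g ≫ f).op g₀ = G.map g.op (G.map f.op g₀) := by
      rw [show (g ≫ f).op = f.op ≫ g.op from rfl, G.map_comp]
      rfl
    rw [← hcomp, conflation_comp_zero ET hconf]
    exact fp_map_zero hG g₀
  obtain ⟨x₀, hx₀⟩ := ((hlex g f hconf).2 y).mp hgy
  -- factorization property of `Q`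
  have hQfac : ∀ (W : Cᵒᵖ) (k : unop W ⟶ Y), Q W (k ≫ f) = i.app W (F.map k.op y) := by
    intro W k
    have hcomp : Q W (k ≫ f) = G.map k.op (Q (op Y) f) := by
      show G.map (k ≫ f).op g₀ = G.map k.op (G.map f.op g₀)
      rw [show (k ≫ f).op = f.op ≫ k.op from rfl, G.map_comp]
      rfl
    rw [hcomp, ← hy, ← nat_app i k.op y]
  -- choice of presentations of elements of `G`
  have exists_hw : ∀ (W : Cᵒᵖ) (z : G.obj W), ∃ (h : unop W ⟶ X) (w : F.obj W),
      p.app W h = pG.app W z ∧ i.app W w = z - Q W h := by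
    intro W z
    obtain ⟨(h : unop W ⟶ X), hh⟩ := hsurjS W (pG.app W z)
    have : pG.app W (z - Q W h) = 0 := by
      rw [AddMonoidHom.map_sub, hpQ, hh, sub_self]
    obtain ⟨w, hw⟩ := (hexact W _).mp this
    exact ⟨h, w, hh, hw⟩
  -- the value of the retraction is independent of choices
  have key : ∀ (W : Cᵒᵖ) (z : G.obj W) (h h' : unop W ⟶ X) (w w' : F.obj W),
      p.app W h = pG.app W z → p.app W h' = pG.app W z →
      i.app W w = z - Q W h → i.app W w' = z - Q W h' →
      w + F.map h.op x₀ = w' + F.map h'.op x₀ := by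
    intro W z h h' w w' hh hh' hw hw'
    have hker : p.app W (h - h') = 0 := by
      rw [show p.app W (h - h') = p.app W h - p.app W h' from map_sub _ _ _, hh, hh', sub_self]
    obtain ⟨k, hk⟩ := (hkerS (unop W) (h - h')).mp hker
    have hiww' : i.app W (w - w') = i.app W (-(F.map k.op y)) := by
      rw [AddMonoidHom.map_sub, hw, hw', AddMonoidHom.map_neg]
      rw [← hQfac W k, hk, hQsub]
      abel
    have hww' : w - w' = -(F.map k.op y) := hinj W hiww'
    have hkx : F.map k.op y = F.map h.op x₀ - F.map h'.op x₀ := by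
      rw [← hx₀, ← fp_map_sub hF h h' x₀, ← hk]
      rw [show (k ≫ f).op = f.op ≫ k.op from rfl, F.map_comp]
      rfl
    rw [hkx, neg_sub] at hww'
    have h2 := sub_eq_sub_iff_add_eq_add.mp hww'
    rw [h2, add_comm]
    -- choose data for every element of `G`
  choose hfn wfn hp1 hp2 using exists_hw
  set rfun : ∀ (W : Cᵒᵖ), G.obj W → F.obj W :=
    fun W z => wfn W z + F.map (hfn W z).op x₀ with hrdef
  have rspec : ∀ (W : Cᵒᵖ) (z : G.obj W) (h : unop W ⟶ X) (w : F.obj W),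
      p.app W h = pG.app W z → i.app W w = z - Q W h →
      rfun W z = w + F.map h.op x₀ :=
    fun W z h w hh hw => key W z (hfn W z) h (wfn W z) w (hp1 W z) hh (hp2 W z) hw
  have hadd : ∀ (W : Cᵒᵖ) (z₁ z₂ : G.obj W),
      rfun W (z₁ + z₂) = rfun W z₁ + rfun W z₂ := by
    intro W z₁ z₂
    have e1 : rfun W (z₁ + z₂) = (wfn W z₁ + wfn W z₂) +
        F.map (hfn W z₁ + hfn W z₂).op x₀ := by
      refine rspec W (z₁ + z₂) _ _ ?_ ?_
      · rw [AddMonoidHom.map_add, show p.app W (hfn W z₁ + hfn W z₂) = p.app W (hfn W z₁) + p.app W (hfn W z₂) from map_add _ _ _, hp1, hp1]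
      · rw [AddMonoidHom.map_add, hp2 W z₁, hp2 W z₂, hQadd]
        abel
    rw [e1, fp_map_add hF]
    show _ = (wfn W z₁ + F.map (hfn W z₁).op x₀) + (wfn W z₂ + F.map (hfn W z₂).op x₀)
    abel
  refine ⟨{ app := fun W => AddCommGrpCat.ofHom (AddMonoidHom.mk' (rfun W) (hadd W)),
            naturality := ?_ }, ?_⟩
  · intro W W' u
    refine AddCommGrpCat.ext fun z => ?_
    show rfun W' (G.map u z) = F.map u (rfun W z)
    have hh : p.app W' (u.unop ≫ hfn W z) = pG.app W' (G.map u z) := by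
      have hnp := nat_app p u (hfn W z)
      rw [show (preadditiveYoneda.obj X).map u (hfn W z) = u.unop ≫ hfn W z from rfl] at hnp
      rw [hnp, hp1, ← nat_app pG u z]
    have hw : i.app W' (F.map u (wfn W z)) = G.map u z - Q W' (u.unop ≫ hfn W z) := by
      rw [nat_app i u (wfn W z), hp2, AddMonoidHom.map_sub]
      congr 1
      show G.map u (G.map (hfn W z).op g₀) = G.map (u.unop ≫ hfn W z).op g₀
      rw [show (u.unop ≫ hfn W z).op = (hfn W z).op ≫ u from rfl, G.map_comp]
      rfl
    rw [rspec W' (G.map u z) _ _ hh hw]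
    show _ = F.map u (wfn W z + F.map (hfn W z).op x₀)
    rw [AddMonoidHom.map_add]
    congr 1
    show F.map (u.unop ≫ hfn W z).op x₀ = F.map u (F.map (hfn W z).op x₀)
    rw [show (u.unop ≫ hfn W z).op = (hfn W z).op ≫ u from rfl, F.map_comp]
    rfl
  · apply NatTrans.ext
    funext W
    refine AddCommGrpCat.ext fun x => ?_
    show rfun W (i.app W x) = x
    have hh : p.app W (0 : unop W ⟶ X) = pG.app W (i.app W x) := by
      rw [show p.app W (0 : unop W ⟶ X) = 0 from map_zero _, (hexact W (i.app W x)).mpr ⟨x, rfl⟩]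
    have hw : i.app W x = i.app W x - Q W 0 := by rw [hQzero, sub_zero]
    rw [rspec W (i.app W x) 0 x hh hw, fp_map_zero hF, add_zero]

end MPR

section Push
variable {C : Type u} [Category.{v} C] [Preadditive C] [HasZeroObject C] [HasBinaryBiproducts C]
variable (F : Mod C) {Y X : C} (f : Y ⟶ X) (y : F.obj (op Y))

/-- The subgroup along which we quotient to build the pushout. -/
def pushNu (hF : IsFinitelyPresented F) (W : C) :
    (W ⟶ Y) →+ ((W ⟶ X) × F.obj (op W)) :=
  AddMonoidHom.mk' (fun k => (k ≫ f, -F.map k.op y))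
    (fun a b => by
      refine Prod.ext ?_ ?_
      · exact Preadditive.add_comp _ _ _ a b f
      · show -(F.map (a + b).op y) = -(F.map a.op y) + -(F.map b.op y)
        rw [fp_map_add hF a b y]
        abel)

/-- The component morphisms of the pushout functor. -/
def pushMapHom (hF : IsFinitelyPresented F) {W W' : Cᵒᵖ} (u : W ⟶ W') :
    ((unop W ⟶ X) × F.obj W) →+ ((unop W' ⟶ X) × F.obj W') :=
  AddMonoidHom.prodMap
    (AddMonoidHom.mk' (fun h => u.unop ≫ h)
      (fun a b => Preadditive.comp_add _ _ _ u.unop a b))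
    (F.map u).hom

/-- The pushout of `Hom(-,Y) ⟶ Hom(-,X)` along `Hom(-,Y) ⟶ F`. -/
def pushFunctor (hF : IsFinitelyPresented F) : Mod C where
  obj W := AddCommGrpCat.of
    (((unop W ⟶ X) × F.obj W) ⧸ (pushNu F f y hF (unop W)).range)
  map {W W'} u := AddCommGrpCat.ofHom <| QuotientAddGroup.map _ _ (pushMapHom F hF u)
      (by
        rintro a ⟨k, rfl⟩
        refine ⟨u.unop ≫ k, ?_⟩
        refine Prod.ext ?_ ?_
        · show (u.unop ≫ k) ≫ f = u.unop ≫ (k ≫ f)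
          rw [Category.assoc]
        · show -(F.map (u.unop ≫ k).op y) = F.map u (-(F.map k.op y))
          rw [AddMonoidHom.map_neg]
          congr 1
          rw [show (u.unop ≫ k).op = k.op ≫ u from rfl, F.map_comp]
          rfl)
  map_id W := by
    refine AddCommGrpCat.ext fun x => QuotientAddGroup.induction_on x fun a => ?_
    refine congrArg QuotientAddGroup.mk (Prod.ext ?_ ?_)
    · simp [pushMapHom]
    · show F.map (𝟙 W) a.2 = a.2
      rw [F.map_id]
      rfl
  map_comp {W W' W''} u v := by
    refine AddCommGrpCat.ext fun x => QuotientAddGroup.induction_on x fun a => ?_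
    refine congrArg QuotientAddGroup.mk (Prod.ext ?_ ?_)
    · simp [pushMapHom]
    · show F.map (u ≫ v) a.2 = F.map v (F.map u a.2)
      rw [F.map_comp]
      rfl

/-- The inclusion of `F` into the pushout. -/
def pushIncl (hF : IsFinitelyPresented F) : F ⟶ pushFunctor F f y hF where
  app W := AddCommGrpCat.ofHom <| (QuotientAddGroup.mk' _).comp (AddMonoidHom.inr (unop W ⟶ X) (F.obj W))
  naturality {W W'} u := by
    refine AddCommGrpCat.ext fun x => ?_
    refine congrArg QuotientAddGroup.mk (Prod.ext ?_ ?_)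
    · exact comp_zero.symm
    · rfl

/-- The projection of the pushout onto the defect functor. -/
def pushProj (hF : IsFinitelyPresented F) : pushFunctor F f y hF ⟶ defectFunctor f where
  app W := AddCommGrpCat.ofHom <| QuotientAddGroup.lift _
    ((QuotientAddGroup.mk' (facHom f (unop W)).range).comp
      (AddMonoidHom.fst (unop W ⟶ X) (F.obj W)))
    (by
      rintro a ⟨k, rfl⟩
      show ((k ≫ f : unop W ⟶ X) : _ ⧸ (facHom f (unop W)).range) = 0
      exact (QuotientAddGroup.eq_zero_iff _).mpr ⟨k, rfl⟩)
  naturality {W W'} u := by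
    refine AddCommGrpCat.ext fun x => QuotientAddGroup.induction_on x fun a => ?_
    rfl


lemma pushIncl_injective (hF : IsFinitelyPresented F)
    (hzero : ∀ ⦃W : C⦄ (k : W ⟶ Y), k ≫ f = 0 → F.map k.op y = 0) (W : Cᵒᵖ) :
    Function.Injective ((pushIncl F f y hF).app W) := by
  intro x₁ x₂ h
  have h' : ((((0 : unop W ⟶ X), x₁) : (unop W ⟶ X) × F.obj W) :
      _ ⧸ (pushNu F f y hF (unop W)).range) = (((0 : unop W ⟶ X), x₂)) := h
  obtain ⟨k, hk⟩ := QuotientAddGroup.eq.mp h'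
  have hk1 : k ≫ f = -0 + 0 := congrArg Prod.fst hk
  have hk2 : -(F.map k.op y) = -x₁ + x₂ := congrArg Prod.snd hk
  have : F.map k.op y = 0 := hzero k (by simpa using hk1)
  rw [this, neg_zero] at hk2
  exact (neg_add_eq_zero.mp hk2.symm)

lemma pushProj_surjective (hF : IsFinitelyPresented F) (W : Cᵒᵖ) :
    Function.Surjective ((pushProj F f y hF).app W) := by
  intro s
  refine QuotientAddGroup.induction_on s fun h => ⟨QuotientAddGroup.mk (h, 0), rfl⟩

lemma push_exact (hF : IsFinitelyPresented F) (W : Cᵒᵖ)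
    (z : (pushFunctor F f y hF).obj W) :
    (pushProj F f y hF).app W z = 0 ↔ ∃ x, (pushIncl F f y hF).app W x = z := by
  refine QuotientAddGroup.induction_on z fun a => ?_
  constructor
  · intro h0
    have : ((a.1 : unop W ⟶ X) : _ ⧸ (facHom f (unop W)).range) = 0 := h0
    obtain ⟨k, hk⟩ := (QuotientAddGroup.eq_zero_iff _).mp this
    refine ⟨a.2 + F.map k.op y, ?_⟩
    show (((0 : unop W ⟶ X), a.2 + F.map k.op y) :
      _ ⧸ (pushNu F f y hF (unop W)).range) = QuotientAddGroup.mk a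
    rw [QuotientAddGroup.eq]
    have hk' : k ≫ f = a.1 := hk
    refine ⟨k, Prod.ext ?_ ?_⟩
    · show k ≫ f = -(0 : unop W ⟶ X) + a.1
      rw [hk', neg_zero, zero_add]
    · show -(F.map k.op y) = -(a.2 + F.map k.op y) + a.2
      abel
  · rintro ⟨x, hx⟩
    rw [← hx]
    show QuotientAddGroup.mk' (facHom f (unop W)).range 0 = 0
    exact AddMonoidHom.map_zero _

lemma push_fp (hF : IsFinitelyPresented F) :
    IsFinitelyPresented (pushFunctor F f y hF) := by
  obtain ⟨Y₀, X₀, f₀, q, hq1, hq2⟩ := id hF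
  obtain ⟨(v : Y ⟶ X₀), hv⟩ := hq1 (op Y) y
  refine ⟨Y ⊞ Y₀, X ⊞ X₀, biprod.desc (biprod.lift f (-v)) (biprod.lift 0 f₀),
    { app := fun W => AddCommGrpCat.ofHom <| (QuotientAddGroup.mk' (pushNu F f y hF (unop W)).range).comp
        ((AddMonoidHom.mk' (fun h : unop W ⟶ X ⊞ X₀ => h ≫ biprod.fst)
            (fun a b => Preadditive.add_comp _ _ _ a b _)).prod
          ((q.app W).hom.comp (AddMonoidHom.mk' (fun h : unop W ⟶ X ⊞ X₀ => h ≫ biprod.snd)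
            (fun a b => Preadditive.add_comp _ _ _ a b _))))
      naturality := ?_ }, ?_, ?_⟩
  · intro W W' u
    refine AddCommGrpCat.ext fun (h : unop W ⟶ X ⊞ X₀) => ?_
    refine congrArg QuotientAddGroup.mk (Prod.ext ?_ ?_)
    · exact (Category.assoc _ _ _)
    · show q.app W' ((u.unop ≫ h) ≫ biprod.snd) = F.map u (q.app W (h ≫ biprod.snd))
      rw [Category.assoc]
      exact nat_app q u (h ≫ biprod.snd)
  · intro W z
    refine QuotientAddGroup.induction_on z fun a => ?_
    obtain ⟨(s : unop W ⟶ X₀), hs⟩ := hq1 W a.2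
    refine ⟨biprod.lift a.1 s, ?_⟩
    show QuotientAddGroup.mk (biprod.lift a.1 s ≫ biprod.fst, q.app W (biprod.lift a.1 s ≫ biprod.snd)) = _
    rw [biprod.lift_fst, biprod.lift_snd, hs]
  · intro W h
    constructor
    · intro h0
      have : (((h ≫ biprod.fst, q.app (op W) (h ≫ biprod.snd)) : (W ⟶ X) × F.obj (op W)) :
          _ ⧸ (pushNu F f y hF W).range) = 0 := h0
      obtain ⟨k, hk⟩ := (QuotientAddGroup.eq_zero_iff _).mp this
      have hk1 : k ≫ f = h ≫ biprod.fst := congrArg Prod.fst hk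
      have hk2 : -(F.map k.op y) = q.app (op W) (h ≫ biprod.snd) := congrArg Prod.snd hk
      clear hk
      have hkv : F.map k.op y = q.app (op W) (k ≫ v) := by
        rw [← hv, ← nat_app q k.op v]
        rfl
      have : q.app (op W) (h ≫ biprod.snd + k ≫ v) = 0 := by
        rw [show q.app (op W) (h ≫ biprod.snd + k ≫ v) = q.app (op W) (h ≫ biprod.snd) + q.app (op W) (k ≫ v) from map_add _ _ _, ← hk2, ← hkv]
        abel
      obtain ⟨m, hm⟩ := (hq2 W _).mp this
      refine ⟨biprod.lift k m, ?_⟩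
      apply biprod.hom_ext
      · rw [biprod.lift_desc]
        simp only [Preadditive.add_comp, Category.assoc, biprod.lift_fst, comp_zero]
        rw [hk1]
        simp
      · rw [biprod.lift_desc]
        simp only [Preadditive.add_comp, Category.assoc, biprod.lift_snd]
        rw [Preadditive.comp_neg, hm]
        abel
    · rintro ⟨t, rfl⟩
      have ht : t = biprod.lift (t ≫ biprod.fst) (t ≫ biprod.snd) := by
        apply biprod.hom_ext <;> simp
      set k := t ≫ biprod.fst with hkdef
      set m := t ≫ biprod.snd with hmdef
      have h1 : (t ≫ biprod.desc (biprod.lift f (-v)) (biprod.lift 0 f₀)) ≫ biprod.fst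
          = k ≫ f := by
        rw [ht, biprod.lift_desc]
        simp
      have h2 : (t ≫ biprod.desc (biprod.lift f (-v)) (biprod.lift 0 f₀)) ≫ biprod.snd
          = -(k ≫ v) + m ≫ f₀ := by
        rw [ht, biprod.lift_desc]
        simp only [Preadditive.add_comp, Category.assoc, biprod.lift_snd]
        rw [Preadditive.comp_neg]
      show (((_ ≫ biprod.fst, q.app (op W) (_ ≫ biprod.snd)) : (W ⟶ X) × F.obj (op W)) :
          _ ⧸ (pushNu F f y hF W).range) = 0
      rw [QuotientAddGroup.eq_zero_iff]
      refine ⟨k, ?_⟩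
      refine Prod.ext h1.symm ?_
      show -(F.map k.op y) = q.app (op W) _
      rw [h2, show q.app (op W) (-(k ≫ v) + m ≫ f₀) = -q.app (op W) (k ≫ v) + q.app (op W) (m ≫ f₀) from (map_add _ _ _).trans (congrArg (· + _) (map_neg _ _))]
      have hkv : F.map k.op y = q.app (op W) (k ≫ v) := by
        rw [← hv, ← nat_app q k.op v]
        rfl
      rw [← hkv, (hq2 W (m ≫ f₀)).mpr ⟨m, rfl⟩, add_zero]

lemma push_value (hF : IsFinitelyPresented F) :
    (pushFunctor F f y hF).map f.op (QuotientAddGroup.mk (𝟙 X, 0)) =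
      (pushIncl F f y hF).app (op Y) y := by
  show (QuotientAddGroup.mk (f ≫ 𝟙 X, F.map f.op 0) :
      _ ⧸ (pushNu F f y hF Y).range) = QuotientAddGroup.mk (0, y)
  rw [QuotientAddGroup.eq]
  refine ⟨-(𝟙 Y), ?_⟩
  show ((-(𝟙 Y)) ≫ f, -(F.map (-(𝟙 Y)).op y)) = _
  rw [Preadditive.neg_comp, Category.id_comp, fp_map_neg hF, neg_neg]
  refine Prod.ext ?_ ?_
  · show -f = -(f ≫ 𝟙 X) + 0
    rw [Category.comp_id, add_zero]
  · show F.map (𝟙 Y).op y = -(F.map f.op 0) + y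
    rw [AddMonoidHom.map_zero, neg_zero, zero_add,
      show (𝟙 Y).op = 𝟙 (op Y) from rfl, F.map_id]
    rfl


end Push
/-- For an extriangulated category with weak kernels, the perpendicular
category `(def C)^⊥` in `mod C` coincides with the category of left exact
functors. -/
theorem perp_defect_eq_leftExact
    {C : Type u} [Category.{v} C] [Preadditive C] [HasZeroObject C]
    [HasBinaryBiproducts C] (ET : Extriangulated C) (hwk : HasWeakKernels C)
    (F : Mod C) (hF : IsFinitelyPresented F) :
    (∀ S : Mod C, IsDefect ET S → (∀ α : S ⟶ F, α = 0) ∧ Ext1VanishesFP S F) ↔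
    IsLeftExact ET F := by
  constructor
  · intro hperp Z Y X g f hconf
    have hdef : IsDefect ET (defectFunctor f) :=
      ⟨Z, Y, X, g, f, hconf, defectProj f, defectProj_surjective f, defectProj_ker f⟩
    obtain ⟨hhom, hext⟩ := hperp _ hdef
    have hker0 : ∀ (x : F.obj (op X)), F.map f.op x = 0 → x = 0 := by
      intro x hx
      have hcomp0 : ∀ (W : Cᵒᵖ) (k : unop W ⟶ Y), F.map (k ≫ f).op x = 0 := by
        intro W k
        rw [show (k ≫ f).op = f.op ≫ k.op from rfl, F.map_comp]
        show F.map k.op (F.map f.op x) = 0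
        rw [hx, AddMonoidHom.map_zero]
      have hα : ∀ (W : Cᵒᵖ) (h : unop W ⟶ X), F.map h.op x = 0 := by
        intro W h
        set α : defectFunctor f ⟶ F :=
          { app := fun W => AddCommGrpCat.ofHom <| QuotientAddGroup.lift _
              (AddMonoidHom.mk' (fun h : unop W ⟶ X => F.map h.op x)
                (fun a b => fp_map_add hF a b x))
              (by rintro a ⟨k, rfl⟩; exact hcomp0 W k)
            naturality := by
              intro W W' u
              refine AddCommGrpCat.ext fun s => QuotientAddGroup.induction_on s fun h => ?_
              show F.map (u.unop ≫ h).op x = F.map u (F.map h.op x)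
              rw [show (u.unop ≫ h).op = h.op ≫ u from rfl, F.map_comp]
              rfl } with hαdef
        have h0 : α.app W (QuotientAddGroup.mk h) = 0 := by
          rw [hhom α]
          rfl
        exact h0.symm ▸ rfl
      have := hα (op X) (𝟙 X)
      rwa [show (𝟙 X).op = 𝟙 (op X) from rfl, F.map_id] at this
    refine ⟨?_, ?_⟩
    · intro x₁ x₂ hx
      have h1 : F.map f.op (x₁ - x₂) = 0 := by
        rw [AddMonoidHom.map_sub, hx, sub_self]
      exact sub_eq_zero.mp (hker0 _ h1)
    · intro y
      constructor
      · intro hgy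
        have hzero : ∀ ⦃W : C⦄ (k : W ⟶ Y), k ≫ f = 0 → F.map k.op y = 0 := by
          intro W k hk
          obtain ⟨t, ht⟩ := conflation_exact ET hconf k hk
          rw [← ht, show (t ≫ g).op = g.op ≫ t.op from rfl, F.map_comp]
          show F.map t.op (F.map g.op y) = 0
          rw [hgy, AddMonoidHom.map_zero]
        obtain ⟨r, hr⟩ := hext (pushFunctor F f y hF) (push_fp F f y hF)
          (pushIncl F f y hF) (pushProj F f y hF)
          (pushIncl_injective F f y hF hzero) (pushProj_surjective F f y hF)
          (push_exact F f y hF)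
        refine ⟨r.app (op X) (QuotientAddGroup.mk (𝟙 X, 0)), ?_⟩
        have h1 : F.map f.op (r.app (op X) (QuotientAddGroup.mk (𝟙 X, 0)))
            = r.app (op Y) ((pushFunctor F f y hF).map f.op
                (QuotientAddGroup.mk (𝟙 X, 0))) :=
          (nat_app r f.op _).symm
        have h2 : r.app (op Y) ((pushIncl F f y hF).app (op Y) y) = y :=
          congrArg (fun τ : F ⟶ F => τ.app (op Y) y) hr
        rw [h1, push_value F f y hF, h2]
      · rintro ⟨x, rfl⟩
        have hc : F.map ((g ≫ f).op) x = F.map g.op (F.map f.op x) := by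
          rw [show (g ≫ f).op = f.op ≫ g.op from rfl, F.map_comp]
          rfl
        rw [← hc, conflation_comp_zero ET hconf]
        exact fp_map_zero hF x
  · intro hlex S hS
    obtain ⟨Z, Y, X, g, f, hconf, p, hs, hk⟩ := hS
    exact ⟨fun α => lex_hom_zero ET F hlex hconf S p hs hk α,
      lex_ext1 ET F hF hlex hconf S p hs hk⟩

end PaperStmt

end
end

section
/- For any abelian category A, the Yoneda embedding Y : A → mod A admits an exact left adjoint Q, and def A → mod A → A is a localization sequence: Q is exact, Y is fully faithful right adjoint to Q, and Ker Q = def A, the subcategory of Auslander's defects. -/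
open CategoryTheory CategoryTheory.Limits Opposite

universe w' w v u

noncomputable section

namespace PaperStmt

variable {C : Type u} [Category.{v} C] [Preadditive C]

theorem representable_fp {C : Type u} [Category.{v} C] [Preadditive C] (X : C) :
    IsFinitelyPresented (preadditiveYoneda.obj X) := by
  refine ⟨X, X, 0, 𝟙 _, fun W => fun y => ⟨y, rfl⟩, fun W h => ?_⟩
  constructor
  · intro h0
    exact ⟨0, by rw [zero_comp]; exact h0.symm⟩
  · rintro ⟨k, rfl⟩
    simp
    rfl

/-- The category `mod C` of finitely presented `C`-modules. -/
abbrev ModFP (C : Type u) [Category.{v} C] [Preadditive C] :=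
  ObjectProperty.FullSubcategory (IsFinitelyPresented (C := C))

/-- The Yoneda embedding of `C` into `mod C`. -/
def yonedaFP (C : Type u) [Category.{v} C] [Preadditive C] : C ⥤ ModFP C :=
  ObjectProperty.lift _ preadditiveYoneda representable_fp

/-- A functor `F` over an abelian category `A` is the defect of a short
exact sequence `0 ⟶ X ⟶ Y ⟶ Z ⟶ 0`, i.e. the cokernel of
`Hom(-,Y) ⟶ Hom(-,Z)`. -/
def IsDefectAb {A : Type u} [Category.{v} A] [Abelian A] (F : Mod A) : Prop :=
  ∃ (X Y Z : A) (i : X ⟶ Y) (p : Y ⟶ Z) (w : i ≫ p = 0),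
    (ShortComplex.mk i p w).ShortExact ∧
    ∃ q : preadditiveYoneda.obj Z ⟶ F,
      (∀ W : Aᵒᵖ, Function.Surjective (q.app W)) ∧
      (∀ (W : A) (h : W ⟶ Z), q.app (op W) h = 0 ↔ ∃ k : W ⟶ Y, k ≫ p = h)

section Aux

variable {A : Type u} [Category.{v} A] [Abelian A]

/-- A bundled presentation of a `C`-module. -/
structure Pres (F : Mod A) where
  Y : A
  X : A
  f : Y ⟶ X
  p : preadditiveYoneda.obj X ⟶ F
  surj : ∀ W : Aᵒᵖ, Function.Surjective (p.app W)
  ker : ∀ (W : A) (h : W ⟶ X), p.app (op W) h = 0 ↔ ∃ k : W ⟶ Y, k ≫ f = h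

def ofFP {F : Mod A} (hF : IsFinitelyPresented F) : Pres F :=
  Classical.choice <| by
    obtain ⟨Y, X, f, p, h1, h2⟩ := hF
    exact ⟨⟨Y, X, f, p, h1, h2⟩⟩

def pres (F : ModFP A) : Pres F.obj := ofFP F.property

namespace Pres

variable {F : Mod A} (P : Pres F)

lemma ker' {W : Aᵒᵖ} (h : W.unop ⟶ P.X) : P.p.app W h = 0 ↔ ∃ k : W.unop ⟶ P.Y, k ≫ P.f = h :=
  P.ker W.unop h

lemma p_f : P.p.app (op P.Y) P.f = 0 := (P.ker _ _).2 ⟨𝟙 _, Category.id_comp _⟩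

lemma map_p {W W' : Aᵒᵖ} (r : W ⟶ W') (h : W.unop ⟶ P.X) :
    F.map r (P.p.app W h) = P.p.app W' (r.unop ≫ h) := by
  have := congrArg (fun (q : (preadditiveYoneda.obj P.X).obj W ⟶ F.obj W') => q h)
    (P.p.naturality r)
  exact this.symm

end Pres

@[simp] lemma yobj_map {X : A} {W W' : Aᵒᵖ} (r : W ⟶ W') (h : W.unop ⟶ X) :
    (preadditiveYoneda.obj X).map r h = r.unop ≫ h := rfl

/-- Evaluation of a natural transformation out of a representable. -/
lemma yoneda_eval {X : A} (G : Mod A) (σ : preadditiveYoneda.obj X ⟶ G) {w : A}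
    (h : w ⟶ X) :
    σ.app (op w) h = G.map h.op (σ.app (op X) (𝟙 X)) := by
  have := congrArg (fun (q : (preadditiveYoneda.obj X).obj (op X) ⟶ G.obj (op w)) => q (𝟙 X))
    (σ.naturality h.op)
  simp only [AddCommGrpCat.coe_comp, Function.comp_apply] at this
  refine Eq.trans ?_ this
  exact congrArg (fun x => σ.app (op w) x) (Category.comp_id h).symm

namespace Pres

variable {F : Mod A} (P : Pres F)

lemma eval {G : Mod A} (τ : F ⟶ G) {W : Aᵒᵖ} (h : W.unop ⟶ P.X) :
    τ.app W (P.p.app W h) = G.map h.op (τ.app (op P.X) (P.p.app (op P.X) (𝟙 P.X))) := by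
  have := yoneda_eval G (P.p ≫ τ) h
  exact this

/-- The morphism corresponding to a natural transformation into a representable. -/
def g {Z : A} (τ : F ⟶ preadditiveYoneda.obj Z) : P.X ⟶ Z :=
  τ.app (op P.X) (P.p.app (op P.X) (𝟙 P.X))

lemma evalY {Z : A} (τ : F ⟶ preadditiveYoneda.obj Z) {W : Aᵒᵖ} (h : W.unop ⟶ P.X) :
    τ.app W (P.p.app W h) = h ≫ P.g τ := by
  exact P.eval τ h

lemma f_g {Z : A} (τ : F ⟶ preadditiveYoneda.obj Z) : P.f ≫ P.g τ = 0 := by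
  have := (P.evalY τ (W := op P.Y) P.f).symm
  rwa [P.p_f, map_zero] at this

lemma wd {Z : A} {g : P.X ⟶ Z} (hg : P.f ≫ g = 0) {W : Aᵒᵖ} {h h' : W.unop ⟶ P.X}
    (e : P.p.app W h = P.p.app W h') : h ≫ g = h' ≫ g := by
  have h0 : P.p.app W (h - h') = 0 := by erw [map_sub, e, sub_self]
  obtain ⟨k, hk⟩ := (P.ker' _).1 h0
  have : (h - h') ≫ g = 0 := by rw [← hk, Category.assoc, hg, comp_zero]
  rw [Preadditive.sub_comp, sub_eq_zero] at this
  exact this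

/-- A chosen preimage under `p`. -/
def lift {W : Aᵒᵖ} (u : F.obj W) : W.unop ⟶ P.X := (P.surj W u).choose

lemma p_lift {W : Aᵒᵖ} (u : F.obj W) : P.p.app W (P.lift u) = u := (P.surj W u).choose_spec

/-- The natural transformation `F ⟶ Hom(-, Z)` induced by `g : X ⟶ Z` with `f ≫ g = 0`. -/
def tau {Z : A} (g : P.X ⟶ Z) (hg : P.f ≫ g = 0) : F ⟶ preadditiveYoneda.obj Z where
  app W := AddCommGrpCat.ofHom <| AddMonoidHom.mk' (fun u => P.lift u ≫ g) <| by
    intro u v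
    have e : P.p.app W (P.lift (u + v)) = P.p.app W (P.lift u + P.lift v) := by
      erw [map_add, P.p_lift, P.p_lift, P.p_lift]
    show P.lift (u + v) ≫ g = P.lift u ≫ g + P.lift v ≫ g
    rw [P.wd hg e, Preadditive.add_comp]
  naturality W W' r := by
    ext u
    obtain ⟨h, rfl⟩ := P.surj W u
    have e1 : P.p.app W' (P.lift (F.map r (P.p.app W h))) = P.p.app W' (r.unop ≫ h) := by
      erw [P.p_lift, P.map_p]
    have e2 : P.p.app W (P.lift (P.p.app W h)) = P.p.app W h := P.p_lift _
    show P.lift (F.map r (P.p.app W h)) ≫ g = r.unop ≫ (P.lift (P.p.app W h) ≫ g)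
    erw [P.wd hg e1, P.wd hg e2, Category.assoc]

lemma tau_eval {Z : A} (g : P.X ⟶ Z) (hg : P.f ≫ g = 0) {W : Aᵒᵖ} (h : W.unop ⟶ P.X) :
    (P.tau g hg).app W (P.p.app W h) = h ≫ g :=
  P.wd hg (P.p_lift _)

lemma g_tau {Z : A} (g : P.X ⟶ Z) (hg : P.f ≫ g = 0) : P.g (P.tau g hg) = g := by
  have := P.tau_eval g hg (W := op P.X) (𝟙 P.X)
  rw [Category.id_comp] at this
  exact this

lemma tau_g {Z : A} (τ : F ⟶ preadditiveYoneda.obj Z) : P.tau (P.g τ) (P.f_g τ) = τ := by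
  ext W u
  obtain ⟨h, rfl⟩ := P.surj W u
  erw [P.tau_eval, P.evalY]

lemma tau_congr {Z : A} {g g' : P.X ⟶ Z} (e : g = g') (hg : P.f ≫ g = 0) :
    P.tau g hg = P.tau g' (e ▸ hg) := by subst e; rfl

end Pres

end Aux

section Adj

variable {A : Type u} [Category.{v} A] [Abelian A]

/-- The underlying natural transformation of a morphism in `mod A`. -/
def toN {F G : ModFP A} (σ : F ⟶ G) : F.obj ⟶ G.obj := σ.hom

lemma fpHom_ext {F G : ModFP A} {α β : F ⟶ G} (h : toN α = toN β) : α = β := ObjectProperty.hom_ext _ h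

lemma toN_comp {F G H : ModFP A} (α : F ⟶ G) (β : G ⟶ H) :
    toN (α ≫ β) = toN α ≫ toN β := rfl

lemma toN_zero {F G : ModFP A} : toN (0 : F ⟶ G) = 0 := rfl

variable (A)

/-- The object part of the left adjoint `Q`. -/
abbrev QO (F : ModFP A) : A := cokernel (pres F).f

lemma fpi (F : ModFP A) {Z : A} (c : QO A F ⟶ Z) :
    (pres F).f ≫ (cokernel.π (pres F).f ≫ c) = 0 := by
  rw [← Category.assoc, cokernel.condition, Limits.zero_comp]

/-- The adjunction equivalence `(Q F ⟶ Z) ≃ (F ⟶ Hom(-, Z))`. -/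
def e (F : ModFP A) (Z : A) : (QO A F ⟶ Z) ≃ (F ⟶ (yonedaFP A).obj Z) where
  toFun c := ObjectProperty.homMk (show F.obj ⟶ preadditiveYoneda.obj Z from
    (pres F).tau (cokernel.π _ ≫ c) (fpi A F c))
  invFun τ := cokernel.desc _ ((pres F).g (toN τ)) ((pres F).f_g _)
  left_inv c := by
    rw [← cancel_epi (cokernel.π (pres F).f), cokernel.π_desc]
    exact (pres F).g_tau (cokernel.π _ ≫ c) (fpi A F c)
  right_inv τ := by
    apply fpHom_ext
    change (pres F).tau _ (fpi A F _) = toN τ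
    have e1 : cokernel.π (pres F).f ≫ cokernel.desc _ ((pres F).g (toN τ)) ((pres F).f_g _) =
        (pres F).g (toN τ) := cokernel.π_desc _ _ _
    rw [Pres.tau_congr _ e1]
    exact (pres F).tau_g (toN τ)

lemma toN_e (F : ModFP A) (Z : A) (c : QO A F ⟶ Z) :
    toN (e A F Z c) = (pres F).tau (cokernel.π _ ≫ c) (fpi A F c) := rfl

lemma toN_ymap {Z Z' : A} (g : Z ⟶ Z') :
    toN ((yonedaFP A).map g) = preadditiveYoneda.map g := rfl

lemma he (F : ModFP A) (Z Z' : A) (g : Z ⟶ Z') (c : QO A F ⟶ Z) :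
    e A F Z' (c ≫ g) = e A F Z c ≫ (yonedaFP A).map g := by
  apply fpHom_ext
  rw [toN_comp, toN_e, toN_e, toN_ymap]
  ext W u
  obtain ⟨h, rfl⟩ := (pres F).surj W u
  show ((pres F).tau _ _).app W _ =
    (preadditiveYoneda.map g).app W (((pres F).tau _ _).app W ((pres F).p.app W h))
  erw [Pres.tau_eval, Pres.tau_eval]
  show h ≫ cokernel.π (pres F).f ≫ c ≫ g = (h ≫ cokernel.π (pres F).f ≫ c) ≫ g
  have key : ∀ h' : W.unop ⟶ (pres F).X,
      h' ≫ cokernel.π (pres F).f ≫ c ≫ g = (h' ≫ cokernel.π (pres F).f ≫ c) ≫ g := by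
    intro h'; simp [Category.assoc]
  exact key h

/-- The left adjoint `Q : mod A ⥤ A` of the Yoneda embedding. -/
def Qf : ModFP A ⥤ A := Adjunction.leftAdjointOfEquiv (e A) (he A)

/-- `Q` is left adjoint to the Yoneda embedding. -/
def adjQ : Qf A ⊣ yonedaFP A := Adjunction.adjunctionOfEquivLeft _ _

variable {A}

lemma Qf_obj (F : ModFP A) : (Qf A).obj F = cokernel (pres F).f := rfl

/-- A lift of a morphism of finitely presented modules to the presenting objects. -/
def aOf {F G : ModFP A} (σ : F ⟶ G) : (pres F).X ⟶ (pres G).X :=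
  (pres G).lift ((toN σ).app (op (pres F).X) ((pres F).p.app (op (pres F).X) (𝟙 _)))

lemma aOf_spec {F G : ModFP A} (σ : F ⟶ G) {W : Aᵒᵖ} (h : W.unop ⟶ (pres F).X) :
    (pres G).p.app W (h ≫ aOf σ) = (toN σ).app W ((pres F).p.app W h) :=
  calc (pres G).p.app W (h ≫ aOf σ)
      = G.obj.map h.op ((pres G).p.app (op (pres F).X) (aOf σ)) :=
        ((pres G).map_p (W := op (pres F).X) (W' := W) h.op (aOf σ)).symm
    _ = G.obj.map h.op ((toN σ).app (op (pres F).X) ((pres F).p.app (op (pres F).X) (𝟙 _))) := by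
        rw [aOf, Pres.p_lift]
    _ = (toN σ).app W ((pres F).p.app W h) := ((pres F).eval (toN σ) h).symm

lemma Q_map {F G : ModFP A} (σ : F ⟶ G) :
    cokernel.π (pres F).f ≫ (Qf A).map σ = aOf σ ≫ cokernel.π (pres G).f := by
  show cokernel.π (pres F).f ≫ cokernel.desc _ _ _ = _
  erw [cokernel.π_desc]
  show (toN (σ ≫ (e A G (QO A G)) (𝟙 _))).app (op (pres F).X)
      ((pres F).p.app (op (pres F).X) (𝟙 _)) = _
  rw [toN_comp]
  show (toN ((e A G (QO A G)) (𝟙 _))).app (op (pres F).X)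
      ((toN σ).app (op (pres F).X) ((pres F).p.app (op (pres F).X) (𝟙 _))) = _
  rw [show (toN σ).app (op (pres F).X) ((pres F).p.app (op (pres F).X) (𝟙 _)) =
      (pres G).p.app (op (pres F).X) (aOf σ) from ((pres G).p_lift _).symm]
  rw [toN_e]
  have := (pres G).tau_eval (cokernel.π (pres G).f ≫ 𝟙 (QO A G)) (fpi A G (𝟙 _))
    (W := op (pres F).X) (aOf σ)
  exact this.trans (by simp; rfl)

instance : (Qf A).PreservesZeroMorphisms where
  map_zero F G := by
    have g0 : (pres F).g (toN (0 : F ⟶ (yonedaFP A).obj (QO A G))) = 0 := by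
      show (0 : F.obj ⟶ preadditiveYoneda.obj (QO A G)).app _ _ = 0
      rw [NatTrans.app_zero]
      rfl
    have h0 : (Qf A).map (0 : F ⟶ G) =
        (e A F (QO A G)).symm ((0 : F ⟶ G) ≫ (e A G (QO A G)) (𝟙 _)) := rfl
    rw [h0, Limits.zero_comp]
    show cokernel.desc _ _ _ = 0
    refine (cancel_epi (cokernel.π (pres F).f)).1 ?_
    erw [cokernel.π_desc, comp_zero]
    exact g0

end Adj

section Instances

variable {A : Type u} [Category.{v} A] [Abelian A]

open ZeroObject

lemma nat_apply {F G : Mod A} (τ : F ⟶ G) {W W' : Aᵒᵖ} (r : W ⟶ W') (x : F.obj W) :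
    τ.app W' (F.map r x) = G.map r (τ.app W x) := by
  have := congrArg (fun (q : F.obj W ⟶ G.obj W') => q x) (τ.naturality r)
  simp only [AddCommGrpCat.coe_comp, Function.comp_apply] at this
  exact this

lemma map_id_apply (F : Mod A) {W : Aᵒᵖ} (x : F.obj W) : F.map (𝟙 W) x = x := by
  rw [F.map_id]; rfl

lemma map_comp_apply (F : Mod A) {W W' W'' : Aᵒᵖ} (r : W ⟶ W') (s : W' ⟶ W'') (x : F.obj W) :
    F.map (r ≫ s) x = F.map s (F.map r x) := by
  rw [F.map_comp]; exact congrFun AddCommGrpCat.coe_comp x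

/-! ### The zero object -/

lemma isZero_y0 : IsZero ((yonedaFP A).obj 0) := by
  constructor
  · intro Y
    refine ⟨⟨⟨0⟩, fun τ => ?_⟩⟩
    apply fpHom_ext
    ext W u
    have hu : u = 0 := (isZero_zero A).eq_of_tgt _ _
    rw [hu, map_zero, map_zero]
  · intro Y
    refine ⟨⟨⟨0⟩, fun τ => ?_⟩⟩
    apply fpHom_ext
    ext W u
    exact (isZero_zero A).eq_of_tgt _ _

instance : HasZeroObject (ModFP A) := ⟨(yonedaFP A).obj 0, isZero_y0⟩

/-! ### Binary products -/

/-- The pointwise product of two `C`-modules. -/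
def prodFunctor (F G : Mod A) : Mod A where
  obj W := AddCommGrpCat.of (F.obj W × G.obj W)
  map r := AddCommGrpCat.ofHom (AddMonoidHom.prodMap (F.map r).hom (G.map r).hom)
  map_id W := by
    ext u
    exacts [map_id_apply F u.1, map_id_apply G u.2]
  map_comp r s := by
    ext u
    exacts [map_comp_apply F r s u.1, map_comp_apply G r s u.2]

lemma prod_fp (F G : ModFP A) : IsFinitelyPresented (prodFunctor F.obj G.obj) := by
  refine ⟨(pres F).Y ⊞ (pres G).Y, (pres F).X ⊞ (pres G).X,
    biprod.map (pres F).f (pres G).f,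
    { app := fun W => AddCommGrpCat.ofHom <| AddMonoidHom.mk'
        (fun h => ((pres F).p.app W (h ≫ biprod.fst), (pres G).p.app W (h ≫ biprod.snd)))
        (fun h h' => by
          show (((pres F).p.app W) ((h + h') ≫ biprod.fst),
            ((pres G).p.app W) ((h + h') ≫ biprod.snd)) = _
          erw [Preadditive.add_comp, Preadditive.add_comp, map_add, map_add]; rfl)
      naturality := fun W W' r => by
        ext h
        refine Prod.ext ?_ ?_
        · show (pres F).p.app W' ((r.unop ≫ h) ≫ biprod.fst) = F.obj.map r ((pres F).p.app W (h ≫ biprod.fst))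
          erw [(pres F).map_p, Category.assoc]
        · show (pres G).p.app W' ((r.unop ≫ h) ≫ biprod.snd) = G.obj.map r ((pres G).p.app W (h ≫ biprod.snd))
          erw [(pres G).map_p, Category.assoc] }, ?_, ?_⟩
  · rintro W ⟨u, v⟩
    refine ⟨biprod.lift ((pres F).lift u) ((pres G).lift v), ?_⟩
    refine Prod.ext ?_ ?_
    · show (pres F).p.app W (biprod.lift ((pres F).lift u) ((pres G).lift v) ≫ biprod.fst) = u
      rw [biprod.lift_fst, Pres.p_lift]
    · show (pres G).p.app W (biprod.lift ((pres F).lift u) ((pres G).lift v) ≫ biprod.snd) = v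
      rw [biprod.lift_snd, Pres.p_lift]
  · intro W h
    constructor
    · intro h0
      have h1 : (pres F).p.app (op W) (h ≫ biprod.fst) = 0 := congrArg Prod.fst h0
      have h2 : (pres G).p.app (op W) (h ≫ biprod.snd) = 0 := congrArg Prod.snd h0
      obtain ⟨k₁, hk₁⟩ := ((pres F).ker _ _).1 h1
      obtain ⟨k₂, hk₂⟩ := ((pres G).ker _ _).1 h2
      refine ⟨biprod.lift k₁ k₂, ?_⟩
      apply biprod.hom_ext
      · simpa using hk₁
      · simpa using hk₂
    · rintro ⟨k, rfl⟩
      refine Prod.ext ?_ ?_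
      · show (pres F).p.app (op W) ((k ≫ biprod.map (pres F).f (pres G).f) ≫ biprod.fst) = 0
        rw [Category.assoc, biprod.map_fst, ← Category.assoc]
        exact ((pres F).ker _ _).2 ⟨k ≫ biprod.fst, rfl⟩
      · show (pres G).p.app (op W) ((k ≫ biprod.map (pres F).f (pres G).f) ≫ biprod.snd) = 0
        rw [Category.assoc, biprod.map_snd, ← Category.assoc]
        exact ((pres G).ker _ _).2 ⟨k ≫ biprod.snd, rfl⟩

/-- The product of two finitely presented modules. -/
def prodFP (F G : ModFP A) : ModFP A := ⟨prodFunctor F.obj G.obj, prod_fp F G⟩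

def prodFst (F G : ModFP A) : prodFP F G ⟶ F :=
  ObjectProperty.homMk (show prodFunctor F.obj G.obj ⟶ F.obj from
    { app := fun W => AddCommGrpCat.ofHom (AddMonoidHom.fst _ _)
      naturality := fun W W' r => rfl })

def prodSnd (F G : ModFP A) : prodFP F G ⟶ G :=
  ObjectProperty.homMk (show prodFunctor F.obj G.obj ⟶ G.obj from
    { app := fun W => AddCommGrpCat.ofHom (AddMonoidHom.snd _ _)
      naturality := fun W W' r => rfl })

def prodIsLimit (F G : ModFP A) : IsLimit (BinaryFan.mk (prodFst F G) (prodSnd F G)) := by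
  refine BinaryFan.isLimitMk
    (fun s => ObjectProperty.homMk <| show s.pt.obj ⟶ prodFunctor F.obj G.obj from
      { app := fun W => AddCommGrpCat.ofHom <| AddMonoidHom.mk'
          (fun u => ((toN s.fst).app W u, (toN s.snd).app W u))
          (fun u v => by
            show ((toN s.fst).app W (u + v), (toN s.snd).app W (u + v)) = _
            rw [map_add, map_add]; rfl)
        naturality := fun W W' r => by
          ext u
          refine Prod.ext ?_ ?_
          · exact nat_apply (toN s.fst) r u
          · exact nat_apply (toN s.snd) r u })
    (fun s => rfl) (fun s => rfl) (fun s m h1 h2 => ?_)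
  apply fpHom_ext
  ext W u
  refine Prod.ext ?_ ?_
  · exact congrArg (fun (ξ : s.pt ⟶ F) => (toN ξ).app W u) h1
  · exact congrArg (fun (ξ : s.pt ⟶ G) => (toN ξ).app W u) h2

instance (F G : ModFP A) : HasLimit (pair F G) :=
  HasLimit.mk ⟨_, prodIsLimit F G⟩

instance : HasBinaryProducts (ModFP A) := hasBinaryProducts_of_hasLimit_pair _

instance : HasFiniteProducts (ModFP A) := hasFiniteProducts_of_has_binary_and_terminal

/-! ### Kernels -/

/-- The pointwise kernel of a morphism of `C`-modules. -/
def kerFunctor {F G : Mod A} (τ : F ⟶ G) : Mod A where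
  obj W := AddCommGrpCat.of (AddMonoidHom.ker (τ.app W).hom)
  map {W W'} r := AddCommGrpCat.ofHom <| AddMonoidHom.mk'
    (fun u => ⟨F.map r u.1, by
      show τ.app W' (F.map r u.1) = 0
      rw [nat_apply, u.2, map_zero]⟩)
    (fun u v => Subtype.ext (map_add _ _ _))
  map_id W := by
    ext u
    exact map_id_apply F u.1
  map_comp r s := by
    ext u
    exact map_comp_apply F r s u.1

/-- The kernel inclusion. -/
def kerι {F G : Mod A} (τ : F ⟶ G) : kerFunctor τ ⟶ F where
  app W := AddCommGrpCat.ofHom (AddMonoidHom.ker (τ.app W).hom).subtype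
  naturality W W' r := rfl

lemma ker_fp {F G : ModFP A} (τ : F ⟶ G) : IsFinitelyPresented (kerFunctor (toN τ)) := by
  set a := aOf τ with ha
  set Pb := pullback a (pres G).f with hPb
  set R := pullback (pullback.fst a (pres G).f) (pres F).f with hR
  refine ⟨R, Pb, pullback.fst _ _,
    { app := fun W => AddCommGrpCat.ofHom <| AddMonoidHom.mk'
        (fun h => ⟨(pres F).p.app W (h ≫ pullback.fst a (pres G).f), by
          show (toN τ).app W _ = 0
          erw [← aOf_spec, Category.assoc, pullback.condition, ← Category.assoc]
          exact ((pres G).ker' _).2 ⟨h ≫ pullback.snd a (pres G).f, rfl⟩⟩)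
        (fun h h' => Subtype.ext (by
          show (pres F).p.app W ((h + h') ≫ pullback.fst a (pres G).f) = _
          erw [Preadditive.add_comp, map_add]; rfl))
      naturality := fun W W' r => by
        ext h
        refine Subtype.ext ?_
        show (pres F).p.app W' ((r.unop ≫ h) ≫ pullback.fst a (pres G).f) =
          F.obj.map r ((pres F).p.app W (h ≫ pullback.fst a (pres G).f))
        erw [(pres F).map_p, Category.assoc] }, ?_, ?_⟩
  · rintro W ⟨v, hv⟩
    have hv' : (toN τ).app W v = 0 := hv
    have h1 : (pres G).p.app W ((pres F).lift v ≫ a) = 0 := by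
      rw [aOf_spec, Pres.p_lift, hv']
    obtain ⟨k, hk⟩ := ((pres G).ker' _).1 h1
    refine ⟨pullback.lift ((pres F).lift v) k hk.symm, ?_⟩
    refine Subtype.ext ?_
    show (pres F).p.app W (pullback.lift ((pres F).lift v) k hk.symm ≫ pullback.fst a (pres G).f) = v
    rw [pullback.lift_fst, Pres.p_lift]
  · intro W h
    constructor
    · intro h0
      have h1 : (pres F).p.app (op W) (h ≫ pullback.fst a (pres G).f) = 0 :=
        congrArg Subtype.val h0
      obtain ⟨k, hk⟩ := ((pres F).ker _ _).1 h1
      exact ⟨pullback.lift h k hk.symm, pullback.lift_fst _ _ _⟩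
    · rintro ⟨t, rfl⟩
      refine Subtype.ext ?_
      show (pres F).p.app (op W) ((t ≫ pullback.fst _ _) ≫ pullback.fst a (pres G).f) = 0
      rw [Category.assoc, pullback.condition, ← Category.assoc]
      exact ((pres F).ker _ _).2 ⟨t ≫ pullback.snd _ _, rfl⟩

/-- The kernel of a morphism of finitely presented modules. -/
def kerFP {F G : ModFP A} (τ : F ⟶ G) : ModFP A := ⟨kerFunctor (toN τ), ker_fp τ⟩

def kerιFP {F G : ModFP A} (τ : F ⟶ G) : kerFP τ ⟶ F :=
  ObjectProperty.homMk (show kerFunctor (toN τ) ⟶ F.obj from kerι (toN τ))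

lemma kerι_comp {F G : ModFP A} (τ : F ⟶ G) : kerιFP τ ≫ τ = 0 := by
  apply fpHom_ext
  ext W u
  rw [toN_zero, NatTrans.app_zero]
  exact u.2

def kerIsLimit {F G : ModFP A} (τ : F ⟶ G) :
    IsLimit (KernelFork.ofι (kerιFP τ) (kerι_comp τ)) := by
  refine KernelFork.IsLimit.ofι _ _
    (fun {T} t ht => ObjectProperty.homMk <| show T.obj ⟶ kerFunctor (toN τ) from
      { app := fun W => AddCommGrpCat.ofHom <| AddMonoidHom.mk'
          (fun u => ⟨(toN t).app W u, by
            show (toN τ).app W ((toN t).app W u) = 0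
            have := congrArg (fun (ξ : T ⟶ G) => (toN ξ).app W u) ht
            simpa [toN_comp, toN_zero, AddCommGrpCat.coe_comp, NatTrans.app_zero] using this⟩)
          (fun u v => Subtype.ext (map_add _ _ _))
        naturality := fun W W' r => by
          ext u
          exact Subtype.ext (nat_apply (toN t) r u) })
    (fun {T} t ht => rfl) (fun {T} t ht m hm => ?_)
  apply fpHom_ext
  ext W u
  refine Subtype.ext ?_
  exact congrArg (fun (ξ : T ⟶ F) => (toN ξ).app W u) hm

instance : HasKernels (ModFP A) :=
  ⟨fun f => HasLimit.mk ⟨_, kerIsLimit f⟩⟩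

instance : HasEqualizers (ModFP A) := Preadditive.hasEqualizers_of_hasKernels

end Instances

section Exactness

variable {A : Type u} [Category.{v} A] [Abelian A]

open CategoryTheory.Abelian CategoryTheory.Abelian.Pseudoelement

/-- The short complex presenting the cokernel. -/
abbrev SP {F : Mod A} (P : Pres F) : ShortComplex A :=
  ShortComplex.mk P.f (cokernel.π P.f) (cokernel.condition _)

lemma SP_exact {F : Mod A} (P : Pres F) : (SP P).Exact :=
  ShortComplex.exact_of_g_is_cokernel _ (cokernelIsCokernel _)

lemma Qker_mono {F G : ModFP A} (τ : F ⟶ G) : Mono ((Qf A).map (kerιFP τ)) := by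
  apply mono_of_zero_of_map_zero
  intro t ht
  obtain ⟨x, rfl⟩ := pseudo_surjective_of_epi (cokernel.π (pres (kerFP τ)).f) t
  erw [← Pseudoelement.comp_apply, Q_map (kerιFP τ), Pseudoelement.comp_apply] at ht
  obtain ⟨y, hy⟩ := pseudo_exact_of_exact (SP_exact (pres F)) _ ht
  obtain ⟨x', rfl⟩ := Quotient.exists_rep x
  obtain ⟨y', rfl⟩ := Quotient.exists_rep y
  rw [pseudoApply_mk', pseudoApply_mk'] at hy
  obtain ⟨Z, r, s, er, es, comm⟩ := Quotient.exact hy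
  have comm' : r ≫ (y'.hom ≫ (pres F).f) = s ≫ (x'.hom ≫ aOf (kerιFP τ)) := comm
  let sx : Z ⟶ (pres (kerFP τ)).X := s ≫ x'.hom
  have h1 : (pres F).p.app (op Z) (sx ≫ aOf (kerιFP τ)) = 0 := by
    show (pres F).p.app (op Z) ((s ≫ x'.hom) ≫ aOf (kerιFP τ)) = 0
    rw [Category.assoc, ← comm', ← Category.assoc]
    exact ((pres F).ker _ _).2 ⟨r ≫ y'.hom, rfl⟩
  have h2 : (toN (kerιFP τ)).app (op Z) ((pres (kerFP τ)).p.app (op Z) sx) = 0 := by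
    rw [← aOf_spec]; exact h1
  have h3 : (pres (kerFP τ)).p.app (op Z) sx = 0 := Subtype.ext h2
  obtain ⟨k, hk⟩ := ((pres (kerFP τ)).ker _ _).1 h3
  have h4 : sx ≫ cokernel.π (pres (kerFP τ)).f = 0 := by
    rw [← hk, Category.assoc, cokernel.condition, comp_zero]
  rw [pseudoApply_mk']
  have key : (⟦Over.mk (x'.hom ≫ cokernel.π (pres (kerFP τ)).f)⟧ :
      Pseudoelement (cokernel (pres (kerFP τ)).f)) =
      ⟦Over.mk (0 : Z ⟶ cokernel (pres (kerFP τ)).f)⟧ := by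
    apply Quotient.sound
    refine ⟨Z, s, 𝟙 Z, es, inferInstance, ?_⟩
    show s ≫ x'.hom ≫ cokernel.π (pres (kerFP τ)).f = 𝟙 Z ≫ 0
    rw [← Category.assoc, show (s ≫ x'.hom) ≫ cokernel.π (pres (kerFP τ)).f = 0 from h4,
      Category.id_comp]
  exact key.trans Pseudoelement.zero_eq_zero

lemma Qker_zero {F G : ModFP A} (τ : F ⟶ G) :
    (Qf A).map (kerιFP τ) ≫ (Qf A).map τ = 0 := by
  rw [← Functor.map_comp, kerι_comp, Functor.map_zero]

lemma Qker_exact {F G : ModFP A} (τ : F ⟶ G) :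
    (ShortComplex.mk ((Qf A).map (kerιFP τ)) ((Qf A).map τ) (Qker_zero τ)).Exact := by
  apply exact_of_pseudo_exact
  intro b hb
  obtain ⟨x, rfl⟩ := pseudo_surjective_of_epi (cokernel.π (pres F).f) b
  rw [show (ShortComplex.mk ((Qf A).map (kerιFP τ)) ((Qf A).map τ) (Qker_zero τ)).g =
    (Qf A).map τ from rfl] at hb
  erw [← Pseudoelement.comp_apply, Q_map τ, Pseudoelement.comp_apply] at hb
  obtain ⟨y, hy⟩ := pseudo_exact_of_exact (SP_exact (pres G)) _ hb
  obtain ⟨x', rfl⟩ := Quotient.exists_rep x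
  obtain ⟨y', rfl⟩ := Quotient.exists_rep y
  rw [pseudoApply_mk', pseudoApply_mk'] at hy
  obtain ⟨Z, r, s, er, es, comm⟩ := Quotient.exact hy
  have comm' : r ≫ (y'.hom ≫ (pres G).f) = s ≫ (x'.hom ≫ aOf τ) := comm
  let sx : Z ⟶ (pres F).X := s ≫ x'.hom
  have h1 : (pres G).p.app (op Z) (sx ≫ aOf τ) = 0 := by
    show (pres G).p.app (op Z) ((s ≫ x'.hom) ≫ aOf τ) = 0
    rw [Category.assoc, ← comm', ← Category.assoc]
    exact ((pres G).ker _ _).2 ⟨r ≫ y'.hom, rfl⟩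
  have h2 : (toN τ).app (op Z) ((pres F).p.app (op Z) sx) = 0 := by
    rw [← aOf_spec]; exact h1
  let u : (kerFunctor (toN τ)).obj (op Z) := ⟨(pres F).p.app (op Z) sx, h2⟩
  let z : Z ⟶ (pres (kerFP τ)).X := (pres (kerFP τ)).lift u
  have hz : (pres (kerFP τ)).p.app (op Z) z = u := Pres.p_lift _ _
  have h3 : (pres F).p.app (op Z) (z ≫ aOf (kerιFP τ)) = (pres F).p.app (op Z) sx := by
    rw [aOf_spec, hz]
    rfl
  have h4 : (pres F).p.app (op Z) (z ≫ aOf (kerιFP τ) - sx) = 0 := by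
    erw [map_sub, h3, sub_self]
  obtain ⟨k, hk⟩ := ((pres F).ker _ _).1 h4
  have h5 : (z ≫ aOf (kerιFP τ)) ≫ cokernel.π (pres F).f =
      sx ≫ cokernel.π (pres F).f := by
    have h6 : (z ≫ aOf (kerιFP τ) - sx) ≫ cokernel.π (pres F).f = 0 := by
      rw [← hk, Category.assoc, cokernel.condition, comp_zero]
    rw [Preadditive.sub_comp, sub_eq_zero] at h6
    exact h6
  refine ⟨pseudoApply (cokernel.π (pres (kerFP τ)).f) (⟦Over.mk z⟧ : Pseudoelement _), ?_⟩
  show pseudoApply ((Qf A).map (kerιFP τ)) _ = _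
  erw [← Pseudoelement.comp_apply, Q_map (kerιFP τ), pseudoApply_mk', pseudoApply_mk']
  apply Quotient.sound
  refine ⟨Z, 𝟙 Z, s, inferInstance, es, ?_⟩
  show 𝟙 Z ≫ z ≫ aOf (kerιFP τ) ≫ cokernel.π (pres F).f =
    s ≫ x'.hom ≫ cokernel.π (pres F).f
  rw [Category.id_comp, ← Category.assoc, h5]
  show (s ≫ x'.hom) ≫ cokernel.π (pres F).f = _
  rw [Category.assoc]

instance Qpreserves_kernels {F G : ModFP A} (τ : F ⟶ G) :
    PreservesLimit (parallelPair τ 0) (Qf A) := by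
  have : Mono ((Qf A).map (kerιFP τ)) := Qker_mono τ
  refine preservesLimit_of_preserves_limit_cone (kerIsLimit τ) ?_
  exact (isLimitMapConeForkEquiv' (Qf A) (kerι_comp τ)).symm ((Qker_exact τ).fIsKernel)

instance : HasBinaryBiproducts (ModFP A) := HasBinaryBiproducts.of_hasBinaryProducts

instance : PreservesFiniteLimits (Qf A) := by
  have : ∀ {F G : ModFP A} (τ : F ⟶ G), PreservesLimit (parallelPair τ 0) (Qf A) :=
    fun τ => Qpreserves_kernels τ
  exact Functor.preservesFiniteLimits_of_preservesKernels (Qf A)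

end Exactness

section Main

variable {A : Type u} [Category.{v} A] [Abelian A]

lemma e_zero (F : ModFP A) (Z : A) : e A F Z 0 = 0 := by
  apply fpHom_ext
  ext W u
  obtain ⟨h, rfl⟩ := (pres F).surj W u
  show ((pres F).tau (cokernel.π _ ≫ 0) (fpi A F 0)).app W ((pres F).p.app W h) =
    (0 : F.obj ⟶ preadditiveYoneda.obj Z).app W ((pres F).p.app W h)
  erw [Pres.tau_eval]
  simp only [NatTrans.app_zero, Limits.comp_zero]
  exact Limits.comp_zero

lemma isZero_QO_iff (F : ModFP A) :
    IsZero ((Qf A).obj F) ↔ ∀ (Z : A) (τ : F ⟶ (yonedaFP A).obj Z), τ = 0 := by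
  constructor
  · intro h Z τ
    have h1 : (e A F Z).symm τ = 0 := h.eq_of_src _ _
    have h2 := congrArg (e A F Z) h1
    rw [Equiv.apply_symm_apply, e_zero] at h2
    exact h2
  · intro h
    rw [IsZero.iff_id_eq_zero]
    have h1 : e A F _ (𝟙 (QO A F)) = e A F _ 0 :=
      (h _ _).trans (e_zero F _).symm
    exact (e A F _).injective h1

lemma tau_zero_of_defect {F : ModFP A} (hd : IsDefectAb F.obj) (Z : A)
    (τ : F ⟶ (yonedaFP A).obj Z) : τ = 0 := by
  obtain ⟨X, Y, Z0, i, pz, w, hse, q, hsurj, hker⟩ := hd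
  set g : Z0 ⟶ Z := (toN τ).app (op Z0) (q.app (op Z0) (𝟙 Z0)) with hgdef
  have hq : ∀ (w' : A) (h : w' ⟶ Z0), (toN τ).app (op w') (q.app (op w') h) = h ≫ g :=
    fun w' h => yoneda_eval (preadditiveYoneda.obj Z) (q ≫ toN τ) h
  have hp0 : q.app (op Y) pz = 0 := (hker Y pz).2 ⟨𝟙 Y, Category.id_comp _⟩
  have hpz : pz ≫ g = 0 := by
    have := hq Y pz
    rw [hp0, map_zero] at this
    exact this.symm
  have hepi : Epi pz := hse.epi_g
  have hg0 : g = 0 := (cancel_epi pz).1 (by rw [hpz, comp_zero])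
  apply fpHom_ext
  ext W u
  obtain ⟨h, rfl⟩ := hsurj W u
  show (toN τ).app W (q.app W h) =
    ((0 : F.obj ⟶ preadditiveYoneda.obj Z)).app W (q.app W h)
  have := hq W.unop h
  erw [hg0, comp_zero] at this
  rw [NatTrans.app_zero]
  exact this

lemma defect_of_isZero {F : ModFP A} (h : IsZero ((Qf A).obj F)) : IsDefectAb F.obj := by
  have hepi : Epi (pres F).f := by
    apply Preadditive.epi_of_cancel_zero
    intro W g hg
    have h1 : g = cokernel.π (pres F).f ≫ cokernel.desc _ g hg := (cokernel.π_desc _ _ _).symm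
    rw [h1, show cokernel.desc (pres F).f g hg = 0 from h.eq_of_src _ _, comp_zero]
  refine ⟨kernel (pres F).f, (pres F).Y, (pres F).X, kernel.ι _, (pres F).f,
    kernel.condition _, ?_, (pres F).p, (pres F).surj, fun W h' => (pres F).ker W h'⟩
  exact { exact := ShortComplex.exact_of_f_is_kernel _ (kernelIsKernel _),
          mono_f := inferInstance, epi_g := hepi }

end Main

/-- **Auslander's formula.**  For an abelian category `A`, the Yoneda
embedding `A ⥤ mod A` admits an exact left adjoint `Q`, giving a
localization sequence `def A → mod A → A`:  `Q` is exact, the Yoneda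
embedding is a fully faithful right adjoint of `Q`, and `Ker Q = def A`. -/
theorem auslander_formula (A : Type u) [Category.{v} A] [Abelian A] :
    (yonedaFP A).Full ∧ (yonedaFP A).Faithful ∧
    ∃ Q : ModFP A ⥤ A, Nonempty (Q ⊣ yonedaFP A) ∧
      Nonempty (PreservesFiniteLimits Q) ∧ Nonempty (PreservesFiniteColimits Q) ∧
      ∀ F : ModFP A, IsZero (Q.obj F) ↔ IsDefectAb F.obj := by
  refine ⟨?_, ?_, Qf A, ⟨adjQ A⟩, ⟨inferInstance⟩, ⟨?_⟩, ?_⟩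
  · show (ObjectProperty.lift _ preadditiveYoneda representable_fp).Full
    infer_instance
  · show (ObjectProperty.lift _ preadditiveYoneda representable_fp).Faithful
    infer_instance
  · have : PreservesColimitsOfSize.{0, 0} (Qf A) := (adjQ A).leftAdjoint_preservesColimits
    exact PreservesColimitsOfSize.preservesFiniteColimits _
  · intro F
    exact ⟨fun h => defect_of_isZero h,
      fun hd => (isZero_QO_iff F).2 (fun Z τ => tau_zero_of_defect hd Z τ)⟩

end PaperStmt

end
end
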